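/- arXiv:1312.3798 — 5 statements merged into one kernel-verified Lean document; each statement's English description precedes it below -/
import Mathlib

section
/- Let (X, Σ, μ) be a measure space, 1 < p < ∞, and let T₁, …, Tₙ : X → X be pairwise commuting measurable maps such that μ(Tⱼ⁻¹(A)) ≤ μ(A) for every A ∈ Σ and each j. Let f : X → ℝ be in L^p(μ) and suppose Δ_{T₁}⋯Δ_{Tₙ} f = 0 μ-almost everywhere. Then there exist functions f₁, …, fₙ ∈ L^p(μ) with fⱼ ∘ Tⱼ = fⱼ μ-almost everywhere for each j, and f = f₁ + ⋯ + fₙ μ-almost everywhere. -/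
open MeasureTheory Filter Finset
open scoped ENNReal NNReal Topology

/-- The `T`-difference operator `Δ_T f = f ∘ T - f`. -/
def deltaK {X : Type*} (T : X → X) (f : X → ℝ) : X → ℝ := fun x => f (T x) - f x

section Koopman

variable {X : Type*} [MeasurableSpace X] {μ : Measure X} {T : X → X}

theorem koop_qmp (hT : Measurable T) (hc : ∀ A, MeasurableSet A → μ (T ⁻¹' A) ≤ μ A) :
    Measure.QuasiMeasurePreserving T μ μ :=
  ⟨hT, Measure.absolutelyContinuous_of_le (Measure.le_iff.2 fun s hs => by
    rw [Measure.map_apply hT hs]; exact hc s hs)⟩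

theorem eLpNorm_comp_le (hT : Measurable T) (hc : ∀ A, MeasurableSet A → μ (T ⁻¹' A) ≤ μ A)
    (q : ℝ≥0∞) {g : X → ℝ} (hg : AEStronglyMeasurable g μ) :
    eLpNorm (g ∘ T) q μ ≤ eLpNorm g q μ := by
  have hmle : Measure.map T μ ≤ μ :=
    Measure.le_iff.2 fun s hs => by rw [Measure.map_apply hT hs]; exact hc s hs
  have h1 : g ∘ T =ᵐ[μ] hg.mk g ∘ T := (koop_qmp hT hc).ae_eq_comp hg.ae_eq_mk
  calc eLpNorm (g ∘ T) q μ = eLpNorm (hg.mk g ∘ T) q μ := eLpNorm_congr_ae h1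
    _ = eLpNorm (hg.mk g) q (Measure.map T μ) :=
        (eLpNorm_map_measure hg.stronglyMeasurable_mk.aestronglyMeasurable hT.aemeasurable).symm
    _ ≤ eLpNorm (hg.mk g) q μ := eLpNorm_mono_measure _ hmle
    _ = eLpNorm g q μ := eLpNorm_congr_ae hg.ae_eq_mk.symm

theorem memLp_comp (hT : Measurable T) (hc : ∀ A, MeasurableSet A → μ (T ⁻¹' A) ≤ μ A)
    {q : ℝ≥0∞} {g : X → ℝ} (hg : MemLp g q μ) : MemLp (g ∘ T) q μ :=
  ⟨hg.1.comp_quasiMeasurePreserving (koop_qmp hT hc),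
    lt_of_le_of_lt (eLpNorm_comp_le hT hc q hg.1) hg.2⟩

variable (q : ℝ≥0∞) [Fact (1 ≤ q)]

/-- The Koopman operator on `Lp`. -/
noncomputable def koop (hT : Measurable T) (hc : ∀ A, MeasurableSet A → μ (T ⁻¹' A) ≤ μ A) :
    Lp ℝ q μ →L[ℝ] Lp ℝ q μ := by
  refine LinearMap.mkContinuous
    { toFun := fun F => (memLp_comp hT hc (Lp.memLp F)).toLp ((F : X →ₘ[μ] ℝ) ∘ T)
      map_add' := ?_, map_smul' := ?_ } 1 ?_
  · intro F G
    apply Lp.ext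
    filter_upwards [MemLp.coeFn_toLp (memLp_comp hT hc (Lp.memLp (F + G))),
      Lp.coeFn_add ((memLp_comp hT hc (Lp.memLp F)).toLp _)
        ((memLp_comp hT hc (Lp.memLp G)).toLp _),
      MemLp.coeFn_toLp (memLp_comp hT hc (Lp.memLp F)),
      MemLp.coeFn_toLp (memLp_comp hT hc (Lp.memLp G)),
      (koop_qmp hT hc).ae_eq_comp (Lp.coeFn_add F G)] with x h1 h2 h3 h4 h5
    rw [h1, h2]
    simp only [Function.comp_apply, Pi.add_apply] at h3 h4 h5 ⊢
    rw [h5, h3, h4]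
  · intro c F
    apply Lp.ext
    filter_upwards [MemLp.coeFn_toLp (memLp_comp hT hc (Lp.memLp (c • F))),
      Lp.coeFn_smul c ((memLp_comp hT hc (Lp.memLp F)).toLp _),
      MemLp.coeFn_toLp (memLp_comp hT hc (Lp.memLp F)),
      (koop_qmp hT hc).ae_eq_comp (Lp.coeFn_smul c F)] with x h1 h2 h3 h4
    rw [h1]
    simp only [RingHom.id_apply]
    rw [h2]
    simp only [Function.comp_apply, Pi.smul_apply] at h3 h4 ⊢
    rw [h4, h3]
  · intro F
    rw [one_mul]
    simp only [LinearMap.coe_mk, AddHom.coe_mk]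
    rw [Lp.norm_toLp _ (memLp_comp hT hc (Lp.memLp F)), Lp.norm_def]
    exact ENNReal.toReal_mono (Lp.eLpNorm_ne_top F)
      (eLpNorm_comp_le hT hc q (Lp.aestronglyMeasurable F))

theorem koop_coeFn (hT : Measurable T) (hc : ∀ A, MeasurableSet A → μ (T ⁻¹' A) ≤ μ A)
    (F : Lp ℝ q μ) : ↑↑(koop q hT hc F) =ᵐ[μ] ↑↑F ∘ T :=
  MemLp.coeFn_toLp (memLp_comp hT hc (Lp.memLp F))

theorem koop_norm_apply_le (hT : Measurable T) (hc : ∀ A, MeasurableSet A → μ (T ⁻¹' A) ≤ μ A)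
    (F : Lp ℝ q μ) : ‖koop q hT hc F‖ ≤ ‖F‖ := by
  rw [Lp.norm_def, Lp.norm_def]
  refine ENNReal.toReal_mono (Lp.eLpNorm_ne_top F) ?_
  rw [eLpNorm_congr_ae (koop_coeFn q hT hc F)]
  exact eLpNorm_comp_le hT hc q (Lp.aestronglyMeasurable F)

end Koopman

section Avg

variable {E : Type*} [NormedAddCommGroup E] [NormedSpace ℝ E]

/-- Cesàro average of the orbit of `x` under `S`. -/
noncomputable def cesaro (S : E →L[ℝ] E) (N : ℕ) (x : E) : E :=
  (N : ℝ)⁻¹ • ∑ k ∈ Finset.range N, (S ^ k) x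

theorem pow_norm_le {S : E →L[ℝ] E} (hS : ∀ x, ‖S x‖ ≤ ‖x‖) (k : ℕ) (x : E) :
    ‖(S ^ k) x‖ ≤ ‖x‖ := by
  induction k generalizing x with
  | zero => simp
  | succ k ih =>
    rw [pow_succ, ContinuousLinearMap.mul_apply]
    exact (ih (S x)).trans (hS x)

theorem cesaro_norm_le {S : E →L[ℝ] E} (hS : ∀ x, ‖S x‖ ≤ ‖x‖) (N : ℕ) (x : E) :
    ‖cesaro S N x‖ ≤ ‖x‖ := by
  rcases Nat.eq_zero_or_pos N with h | h
  · simp [cesaro, h]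
  · rw [cesaro, norm_smul]
    calc ‖(N : ℝ)⁻¹‖ * ‖∑ k ∈ Finset.range N, (S ^ k) x‖
        ≤ (N : ℝ)⁻¹ * ∑ k ∈ Finset.range N, ‖(S ^ k) x‖ := by
          rw [norm_inv, Real.norm_natCast]
          exact mul_le_mul_of_nonneg_left (norm_sum_le _ _) (by positivity)
      _ ≤ (N : ℝ)⁻¹ * ∑ _k ∈ Finset.range N, ‖x‖ := by
          gcongr with k hk
          exact pow_norm_le hS k x
      _ = ‖x‖ := by
          rw [Finset.sum_const, Finset.card_range, nsmul_eq_mul, ← mul_assoc,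
            inv_mul_cancel₀ (by exact_mod_cast h.ne')]
          ring

theorem cesaro_sub (S : E →L[ℝ] E) (N : ℕ) (x y : E) :
    cesaro S N (x - y) = cesaro S N x - cesaro S N y := by
  simp [cesaro, map_sub, Finset.sum_sub_distrib, smul_sub]

theorem cesaro_fixed {S : E →L[ℝ] E} {x : E} (hx : S x = x) {N : ℕ} (hN : 1 ≤ N) :
    cesaro S N x = x := by
  have hp : ∀ k, (S ^ k) x = x := by
    intro k
    induction k with
    | zero => simp
    | succ k ih => rw [pow_succ, ContinuousLinearMap.mul_apply, hx, ih]
  rw [cesaro]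
  simp only [hp, Finset.sum_const, Finset.card_range]
  rw [← Nat.cast_smul_eq_nsmul ℝ, smul_smul, inv_mul_cancel₀ (Nat.cast_ne_zero.2 (by omega)), one_smul]

theorem cesaro_shift (S : E →L[ℝ] E) (N : ℕ) (x : E) :
    S (cesaro S N x) - cesaro S N x = (N : ℝ)⁻¹ • ((S ^ N) x - x) := by
  rw [cesaro, _root_.map_smul, map_sum, ← smul_sub, ← Finset.sum_sub_distrib]
  congr 1
  have : ∀ k, S ((S ^ k) x) = (S ^ (k + 1)) x := fun k => by
    rw [pow_succ', ContinuousLinearMap.mul_apply]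
  simp only [this]
  rw [Finset.sum_range_sub (fun k => (S ^ k) x) N]
  simp

theorem cesaro_delta (S : E →L[ℝ] E) (N : ℕ) (u : E) :
    cesaro S N (S u - u) = (N : ℝ)⁻¹ • ((S ^ N) u - u) := by
  rw [cesaro]
  congr 1
  have : ∀ k, (S ^ k) (S u - u) = (S ^ (k + 1)) u - (S ^ k) u := fun k => by
    rw [map_sub, pow_succ, ContinuousLinearMap.mul_apply]
  simp only [this]
  rw [Finset.sum_range_sub (fun k => (S ^ k) u) N]
  simp

theorem sub_cesaro_mem (S : E →L[ℝ] E) (x : E) {N : ℕ} (hN : 1 ≤ N) :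
    ∃ u, S u - u = x - cesaro S N x := by
  refine ⟨-((N : ℝ)⁻¹ • ∑ k ∈ Finset.range N, ∑ i ∈ Finset.range k, (S ^ i) x), ?_⟩
  rw [map_neg, neg_sub_neg, _root_.map_smul, map_sum, ← smul_sub, ← Finset.sum_sub_distrib]
  have key : ∀ k ∈ Finset.range N,
      (∑ i ∈ Finset.range k, (S ^ i) x) - S (∑ i ∈ Finset.range k, (S ^ i) x)
        = x - (S ^ k) x := by
    intro k _
    rw [map_sum]
    have h1 : ∀ i, S ((S ^ i) x) = (S ^ (i + 1)) x := fun i => by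
      rw [pow_succ', ContinuousLinearMap.mul_apply]
    simp only [h1]
    rw [← Finset.sum_sub_distrib]
    calc ∑ i ∈ Finset.range k, ((S ^ i) x - (S ^ (i + 1)) x)
        = ∑ i ∈ Finset.range k, -((S ^ (i + 1)) x - (S ^ i) x) :=
          Finset.sum_congr rfl fun i _ => (neg_sub _ _).symm
      _ = -((S ^ k) x - (S ^ 0) x) := by
          rw [Finset.sum_neg_distrib, Finset.sum_range_sub (fun i => (S ^ i) x) k]
      _ = x - (S ^ k) x := by simp [neg_sub]
  rw [Finset.sum_congr rfl key, Finset.sum_sub_distrib, smul_sub, Finset.sum_const,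
    Finset.card_range, cesaro]
  congr 1
  rw [← Nat.cast_smul_eq_nsmul ℝ, smul_smul, inv_mul_cancel₀ (Nat.cast_ne_zero.2 (by omega)),
    one_smul]

end Avg


section Avg2

variable {E : Type*} [NormedAddCommGroup E] [NormedSpace ℝ E]

/-- A fixed point of a contraction lying in the closure of the range of `S - 1` is zero. -/
theorem fixed_mem_closure_eq_zero {S : E →L[ℝ] E} (hS : ∀ x, ‖S x‖ ≤ ‖x‖) {w : E}
    (hw : S w = w) (hmem : w ∈ closure (Set.range fun u => S u - u)) : w = 0 := by
  rw [← norm_le_zero_iff]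
  refine le_of_forall_pos_le_add fun ε hε => ?_
  rw [zero_add]
  obtain ⟨v, ⟨u, rfl⟩, hv⟩ := Metric.mem_closure_iff.1 hmem ε hε
  rw [dist_eq_norm] at hv
  have key : ∀ᶠ N : ℕ in atTop, ‖w‖ ≤ ‖w - (S u - u)‖ + (N : ℝ)⁻¹ * (2 * ‖u‖) := by
    filter_upwards [eventually_ge_atTop 1] with N hN
    have h2 : cesaro S N w = cesaro S N (w - (S u - u)) + cesaro S N (S u - u) := by
      rw [cesaro_sub]; abel
    calc ‖w‖ = ‖cesaro S N (w - (S u - u)) + cesaro S N (S u - u)‖ := by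
          rw [← h2, cesaro_fixed hw hN]
      _ ≤ ‖cesaro S N (w - (S u - u))‖ + ‖cesaro S N (S u - u)‖ := norm_add_le _ _
      _ ≤ ‖w - (S u - u)‖ + (N : ℝ)⁻¹ * (2 * ‖u‖) := by
          refine add_le_add (cesaro_norm_le hS N _) ?_
          rw [cesaro_delta, norm_smul, norm_inv, Real.norm_natCast]
          refine mul_le_mul_of_nonneg_left ?_ (by positivity)
          calc ‖(S ^ N) u - u‖ ≤ ‖(S ^ N) u‖ + ‖u‖ := norm_sub_le _ _
            _ ≤ 2 * ‖u‖ := by have := pow_norm_le hS N u; linarith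
  have hlim : Tendsto (fun N : ℕ => ‖w - (S u - u)‖ + (N : ℝ)⁻¹ * (2 * ‖u‖)) atTop
      (𝓝 (‖w - (S u - u)‖ + 0)) :=
    tendsto_const_nhds.add (by simpa using tendsto_inv_atTop_nhds_zero_nat.mul_const (2 * ‖u‖))
  have := ge_of_tendsto hlim key
  rw [add_zero] at this
  linarith

/-- The closure of the range of `S - 1` is stable under `v ↦ S' v - v` for commuting `S'`. -/
theorem vsub_mem_closure {S S' : E →L[ℝ] E} (hcomm : ∀ u, S' (S u) = S (S' u)) {z : E}
    (hz : z ∈ closure (Set.range fun u => S u - u)) :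
    S' z - z ∈ closure (Set.range fun u => S u - u) := by
  have hcont : Continuous fun v : E => S' v - v := S'.continuous.sub continuous_id
  have himg : (fun v : E => S' v - v) '' (Set.range fun u => S u - u) ⊆
      Set.range fun u => S u - u := by
    rintro _ ⟨_, ⟨u, rfl⟩, rfl⟩
    exact ⟨S' u - u, by simp only [map_sub, hcomm]; abel⟩
  exact closure_mono himg (image_closure_subset_closure_image hcont (Set.mem_image_of_mem _ hz))

theorem exists_fixed_decomp [CompleteSpace E] {S : E →L[ℝ] E} (hS : ∀ x, ‖S x‖ ≤ ‖x‖)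
    (hcau : ∀ x, CauchySeq fun N => cesaro S N x) (x : E) :
    ∃ y, S y = y ∧ x - y ∈ closure (Set.range fun u => S u - u) := by
  obtain ⟨y, hy⟩ := cauchySeq_tendsto_of_complete (hcau x)
  refine ⟨y, ?_, ?_⟩
  · have h1 : Tendsto (fun N => S (cesaro S N x) - cesaro S N x) atTop (𝓝 (S y - y)) :=
      ((S.continuous.tendsto y).comp hy).sub hy
    have h2 : Tendsto (fun N => S (cesaro S N x) - cesaro S N x) atTop (𝓝 0) := by
      refine squeeze_zero_norm (fun N => ?_)
        (by simpa using tendsto_inv_atTop_nhds_zero_nat.mul_const (2 * ‖x‖))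
      rw [cesaro_shift, norm_smul, norm_inv, Real.norm_natCast]
      refine mul_le_mul_of_nonneg_left ?_ (by positivity)
      calc ‖(S ^ N) x - x‖ ≤ ‖(S ^ N) x‖ + ‖x‖ := norm_sub_le _ _
        _ ≤ 2 * ‖x‖ := by have := pow_norm_le hS N x; linarith
    have h3 := tendsto_nhds_unique h1 h2
    rwa [sub_eq_zero] at h3
  · refine mem_closure_of_tendsto (tendsto_const_nhds.sub hy :
      Tendsto (fun N => x - cesaro S N x) atTop (𝓝 (x - y))) ?_
    filter_upwards [eventually_ge_atTop 1] with N hN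
    obtain ⟨u, hu⟩ := sub_cesaro_mem S x hN
    exact ⟨u, hu⟩

end Avg2

section Decomp

variable {E : Type*} [NormedAddCommGroup E] [NormedSpace ℝ E]

theorem foldr_delta_sub (l : List (E →L[ℝ] E)) (a b : E) :
    l.foldr (fun Si v => Si v - v) (a - b)
      = l.foldr (fun Si v => Si v - v) a - l.foldr (fun Si v => Si v - v) b := by
  induction l with
  | nil => rfl
  | cons S l ih => simp only [List.foldr_cons, ih, map_sub]; abel

theorem foldr_delta_comm (l : List (E →L[ℝ] E)) (B : E →L[ℝ] E)
    (h : ∀ Si ∈ l, ∀ x, Si (B x) = B (Si x)) (x : E) :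
    l.foldr (fun Si v => Si v - v) (B x) = B (l.foldr (fun Si v => Si v - v) x) := by
  induction l with
  | nil => rfl
  | cons S l ih =>
    simp only [List.foldr_cons]
    rw [ih fun Si hSi => h Si (List.mem_cons_of_mem _ hSi), h S (by simp) _, ← map_sub]

theorem foldr_delta_mem_closure (S₀ : E →L[ℝ] E) (l : List (E →L[ℝ] E))
    (hcomm : ∀ Si ∈ l, ∀ x, Si (S₀ x) = S₀ (Si x)) {z : E}
    (hz : z ∈ closure (Set.range fun u => S₀ u - u)) :
    l.foldr (fun Si v => Si v - v) z ∈ closure (Set.range fun u => S₀ u - u) := by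
  induction l with
  | nil => exact hz
  | cons S l ih =>
    simp only [List.foldr_cons]
    exact vsub_mem_closure (hcomm S (by simp))
      (ih fun Si hSi => hcomm Si (List.mem_cons_of_mem _ hSi))

theorem decomp : ∀ (n : ℕ) (S : Fin n → E →L[ℝ] E),
    (∀ j (x : E), ‖S j x‖ ≤ ‖x‖) →
    (∀ i j (x : E), S i (S j x) = S j (S i x)) →
    (∀ j (x : E), ∃ y, S j y = y ∧ x - y ∈ closure (Set.range fun u => S j u - u)) →
    ∀ x : E, (List.ofFn S).foldr (fun Si v => Si v - v) x = 0 →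
    ∃ g : Fin n → E, (∀ j, S j (g j) = g j) ∧ x = ∑ j, g j := by
  intro n
  induction n with
  | zero =>
    intro S _ _ _ x hx
    simp only [List.ofFn_zero, List.foldr_nil] at hx
    exact ⟨fun _ => 0, fun j => j.elim0, by simp [hx]⟩
  | succ n IH =>
    intro S hnorm hcomm herg x hx
    set rest := fun i : Fin n => S i.succ with hrest
    obtain ⟨y, hy, hxy⟩ := herg 0 x
    rw [List.ofFn_succ, List.foldr_cons] at hx
    have hcomm0 : ∀ Si ∈ List.ofFn rest, ∀ v : E, Si (S 0 v) = S 0 (Si v) := by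
      intro Si hSi v
      obtain ⟨i, rfl⟩ := List.mem_ofFn.1 hSi
      exact hcomm _ _ v
    have hfy2 : S 0 ((List.ofFn rest).foldr (fun Si v => Si v - v) y)
        = (List.ofFn rest).foldr (fun Si v => Si v - v) y := by
      conv_rhs => rw [← hy, foldr_delta_comm _ _ hcomm0]
    set w := (List.ofFn rest).foldr (fun Si v => Si v - v) (x - y) with hw
    have hwfix : S 0 w = w := by
      rw [hw, foldr_delta_sub, map_sub, hfy2]
      rw [sub_eq_zero.1 hx]
    have hwmem : w ∈ closure (Set.range fun u => S 0 u - u) :=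
      foldr_delta_mem_closure _ _ hcomm0 hxy
    have hw0 : w = 0 := fixed_mem_closure_eq_zero (hnorm 0) hwfix hwmem
    have hzero : (List.ofFn rest).foldr (fun Si v => Si v - v) (x - y) = 0 := by
      rw [← hw]; exact hw0
    obtain ⟨g', hg'fix, hg'sum⟩ := IH rest (fun j => hnorm j.succ)
      (fun i j => hcomm i.succ j.succ) (fun j => herg j.succ) (x - y) hzero
    refine ⟨Fin.cons y g', fun j => ?_, ?_⟩
    · refine Fin.cases ?_ (fun i => ?_) j
      · simpa using hy
      · simpa using hg'fix i
    · rw [Fin.sum_cons, ← hg'sum]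
      abel

end Decomp

section Interp

open MeasureTheory

variable {X : Type*} [MeasurableSpace X] {μ : MeasureTheory.Measure X}

theorem lintegral_sq_eq (h : X → ℝ) :
    ∫⁻ x, (‖h x‖₊ : ℝ≥0∞) ^ (2 : ℝ) ∂μ = eLpNorm h 2 μ ^ (2 : ℝ) := by
  rw [eLpNorm_eq_lintegral_rpow_enorm_toReal (by norm_num) ENNReal.ofNat_ne_top, ← ENNReal.rpow_mul]
  norm_num
  rfl

theorem interp_exponents {p : ℝ≥0∞} (hp1 : 1 < p) (hp2 : p < ⊤) (C : ℝ≥0∞) :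
    ∃ a b : ℝ, 0 ≤ a ∧ 0 < b ∧ ∀ h : X → ℝ, AEStronglyMeasurable h μ →
      eLpNorm h 1 μ ≤ C → eLpNorm h ⊤ μ ≤ C →
      eLpNorm h p μ ≤ C ^ a * eLpNorm h 2 μ ^ b := by
  have hp0 : p ≠ 0 := by positivity
  have hpt : p ≠ ⊤ := hp2.ne
  set pr := p.toReal with hpr
  have hpr1 : 1 < pr := by
    rw [hpr, ← ENNReal.toReal_one]
    exact ENNReal.toReal_strict_mono hpt hp1
  rcases lt_trichotomy p 2 with hlt | heq | hgt
  · -- 1 < p < 2 : interpolate between L¹ and L²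
    have hpr2 : pr < 2 := by
      have := ENNReal.toReal_strict_mono ENNReal.ofNat_ne_top hlt
      simpa using this
    refine ⟨(2 - pr) / pr, 2 * (pr - 1) / pr, div_nonneg (by linarith) (by linarith),
      div_pos (by linarith) (by linarith), fun h hm h1 _ => ?_⟩
    have hnn : AEMeasurable (fun x => (‖h x‖₊ : ℝ≥0∞)) μ := hm.aemeasurable.nnnorm.coe_nnreal_ennreal
    have hconj : Real.HolderConjugate (1 / (2 - pr)) (1 / (pr - 1)) := by
      constructor
      · rw [one_div, one_div, inv_inv, inv_inv, inv_one]; ring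
      · exact div_pos one_pos (by linarith)
      · exact div_pos one_pos (by linarith)
    have HH := ENNReal.lintegral_mul_le_Lp_mul_Lq μ hconj
      (hnn.pow_const (2 - pr)) (hnn.pow_const (2 * (pr - 1)))
    have hL : ∫⁻ x, ((fun x => (‖h x‖₊ : ℝ≥0∞) ^ (2 - pr)) *
        fun x => (‖h x‖₊ : ℝ≥0∞) ^ (2 * (pr - 1))) x ∂μ
        = ∫⁻ x, (‖h x‖₊ : ℝ≥0∞) ^ pr ∂μ := by
      refine lintegral_congr fun x => ?_
      rw [Pi.mul_apply, ← ENNReal.rpow_add_of_nonneg _ _ (by linarith) (by linarith)]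
      congr 1
      ring
    have hR1 : (∫⁻ x, ((‖h x‖₊ : ℝ≥0∞) ^ (2 - pr)) ^ (1 / (2 - pr)) ∂μ) ^ (1 / (1 / (2 - pr)))
        = (∫⁻ x, (‖h x‖₊ : ℝ≥0∞) ∂μ) ^ (2 - pr) := by
      rw [one_div_one_div]
      congr 1
      refine lintegral_congr fun x => ?_
      rw [← ENNReal.rpow_mul, mul_one_div, div_self (by linarith), ENNReal.rpow_one]
    have hR2 : (∫⁻ x, ((‖h x‖₊ : ℝ≥0∞) ^ (2 * (pr - 1))) ^ (1 / (pr - 1)) ∂μ) ^ (1 / (1 / (pr - 1)))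
        = (eLpNorm h 2 μ ^ (2 : ℝ)) ^ (pr - 1) := by
      rw [one_div_one_div, ← lintegral_sq_eq h]
      congr 1
      refine lintegral_congr fun x => ?_
      rw [← ENNReal.rpow_mul, mul_one_div, mul_div_assoc, div_self (by linarith), mul_one]
    rw [hL, hR1, hR2] at HH
    have key : eLpNorm h p μ ≤ (C ^ (2 - pr) * (eLpNorm h 2 μ ^ (2 : ℝ)) ^ (pr - 1)) ^ (1 / pr) := by
      rw [eLpNorm_eq_lintegral_rpow_enorm_toReal hp0 hpt]
      refine ENNReal.rpow_le_rpow ?_ (by positivity)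
      refine HH.trans (mul_le_mul' ?_ le_rfl)
      have h1' : (∫⁻ x, (‖h x‖₊ : ℝ≥0∞) ∂μ) ≤ C := by
        rw [eLpNorm_one_eq_lintegral_enorm] at h1; exact h1
      exact ENNReal.rpow_le_rpow h1' (by linarith)
    refine key.trans (le_of_eq ?_)
    rw [ENNReal.mul_rpow_of_nonneg _ _ (by positivity), ← ENNReal.rpow_mul, ← ENNReal.rpow_mul,
      ← ENNReal.rpow_mul]
    congr 1 <;> field_simp <;> ring
  · -- p = 2
    refine ⟨0, 1, le_rfl, one_pos, fun h _ _ _ => ?_⟩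
    rw [heq, ENNReal.rpow_zero, one_mul, ENNReal.rpow_one]
  · -- 2 < p : interpolate between L² and L∞
    have hpr2 : 2 < pr := by
      have := ENNReal.toReal_strict_mono hpt hgt
      simpa using this
    refine ⟨(pr - 2) / pr, 2 / pr, div_nonneg (by linarith) (by linarith),
      div_pos (by linarith) (by linarith), fun h hm _ hoo => ?_⟩
    by_cases hE0 : eLpNorm h 2 μ = 0
    · have hz : h =ᵐ[μ] 0 := (eLpNorm_eq_zero_iff hm (by norm_num)).1 hE0
      rw [eLpNorm_congr_ae hz, eLpNorm_zero]
      exact zero_le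
    by_cases hC : C = ⊤
    · rw [hC, ENNReal.top_rpow_of_pos (div_pos (by linarith) (by linarith)), ENNReal.top_mul]
      · exact le_top
      · rw [Ne, ENNReal.rpow_eq_zero_iff]
        rintro (⟨h0, _⟩ | ⟨_, hb⟩)
        · exact hE0 h0
        · have : (0:ℝ) < 2 / pr := div_pos (by linarith) (by linarith)
          linarith
    have hae : ∀ᵐ x ∂μ, (‖h x‖₊ : ℝ≥0∞) ≤ C := by
      rw [eLpNorm_exponent_top] at hoo
      filter_upwards [ae_le_eLpNormEssSup (f := h) (μ := μ)] with x hx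
      exact hx.trans hoo
    have hsplit : ∀ᵐ x ∂μ, (‖h x‖₊ : ℝ≥0∞) ^ pr ≤ C ^ (pr - 2) * (‖h x‖₊ : ℝ≥0∞) ^ (2 : ℝ) := by
      filter_upwards [hae] with x hx
      have hxx : (‖h x‖₊ : ℝ≥0∞) ^ pr
          = (‖h x‖₊ : ℝ≥0∞) ^ (pr - 2) * (‖h x‖₊ : ℝ≥0∞) ^ (2 : ℝ) := by
        rw [← ENNReal.rpow_add_of_nonneg _ _ (by linarith) (by norm_num)]
        congr 1
        ring
      rw [hxx]
      exact mul_le_mul' (ENNReal.rpow_le_rpow hx (by linarith)) le_rfl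
    have hint : ∫⁻ x, (‖h x‖₊ : ℝ≥0∞) ^ pr ∂μ ≤ C ^ (pr - 2) * eLpNorm h 2 μ ^ (2 : ℝ) := by
      calc ∫⁻ x, (‖h x‖₊ : ℝ≥0∞) ^ pr ∂μ
          ≤ ∫⁻ x, C ^ (pr - 2) * (‖h x‖₊ : ℝ≥0∞) ^ (2 : ℝ) ∂μ := lintegral_mono_ae hsplit
        _ = C ^ (pr - 2) * ∫⁻ x, (‖h x‖₊ : ℝ≥0∞) ^ (2 : ℝ) ∂μ :=
            lintegral_const_mul' _ _ (ENNReal.rpow_ne_top_of_nonneg (by linarith) hC)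
        _ = _ := by rw [lintegral_sq_eq]
    have key : eLpNorm h p μ ≤ (C ^ (pr - 2) * eLpNorm h 2 μ ^ (2 : ℝ)) ^ (1 / pr) := by
      rw [eLpNorm_eq_lintegral_rpow_enorm_toReal hp0 hpt]
      exact ENNReal.rpow_le_rpow hint (by positivity)
    refine key.trans (le_of_eq ?_)
    rw [ENNReal.mul_rpow_of_nonneg _ _ (by positivity), ← ENNReal.rpow_mul, ← ENNReal.rpow_mul,
      mul_one_div, mul_one_div]

end Interp

section Core

open MeasureTheory Filter Finset
open scoped ENNReal Topology

variable {X : Type*} [MeasurableSpace X] {μ : MeasureTheory.Measure X} {T : X → X}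

theorem aesm_iter (hT : Measurable T) (hc : ∀ A, MeasurableSet A → μ (T ⁻¹' A) ≤ μ A)
    {s : X → ℝ} (hs : AEStronglyMeasurable s μ) (k : ℕ) :
    AEStronglyMeasurable (s ∘ T^[k]) μ :=
  hs.comp_quasiMeasurePreserving ((koop_qmp hT hc).iterate k)

theorem eLpNorm_iter_comp_le (hT : Measurable T) (hc : ∀ A, MeasurableSet A → μ (T ⁻¹' A) ≤ μ A)
    (q : ℝ≥0∞) {s : X → ℝ} (hs : AEStronglyMeasurable s μ) (k : ℕ) :
    eLpNorm (s ∘ T^[k]) q μ ≤ eLpNorm s q μ := by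
  induction k with
  | zero => simp
  | succ k ih =>
    rw [Function.iterate_succ, ← Function.comp_assoc]
    exact (eLpNorm_comp_le hT hc q (aesm_iter hT hc hs k)).trans ih

theorem aesm_afn (hT : Measurable T) (hc : ∀ A, MeasurableSet A → μ (T ⁻¹' A) ≤ μ A)
    {s : X → ℝ} (hs : AEStronglyMeasurable s μ) (N : ℕ) :
    AEStronglyMeasurable (fun x => (N : ℝ)⁻¹ • ∑ k ∈ Finset.range N, s (T^[k] x)) μ := by
  have : AEStronglyMeasurable (fun x => ∑ k ∈ Finset.range N, s (T^[k] x)) μ := by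
    have := Finset.aestronglyMeasurable_sum (Finset.range N)
      (f := fun k => s ∘ T^[k]) (fun k _ => aesm_iter hT hc hs k)
    apply this.congr
    filter_upwards with x
    simp [Finset.sum_apply]
  exact this.const_smul ((N : ℝ)⁻¹)

theorem afn_eLpNorm_le (hT : Measurable T) (hc : ∀ A, MeasurableSet A → μ (T ⁻¹' A) ≤ μ A)
    (q : ℝ≥0∞) (hq : 1 ≤ q) {s : X → ℝ} (hs : AEStronglyMeasurable s μ) (N : ℕ) :
    eLpNorm (fun x => (N : ℝ)⁻¹ • ∑ k ∈ Finset.range N, s (T^[k] x)) q μ ≤ eLpNorm s q μ := by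
  rcases Nat.eq_zero_or_pos N with h | h
  · subst h
    simp
  · have heq : (fun x => (N : ℝ)⁻¹ • ∑ k ∈ Finset.range N, s (T^[k] x))
        = (N : ℝ)⁻¹ • ∑ k ∈ Finset.range N, s ∘ T^[k] := by
      funext x
      simp [Finset.sum_apply]
    rw [heq, eLpNorm_const_smul]
    calc (‖(N : ℝ)⁻¹‖₊ : ℝ≥0∞) * eLpNorm (∑ k ∈ Finset.range N, s ∘ T^[k]) q μ
        ≤ (‖(N : ℝ)⁻¹‖₊ : ℝ≥0∞) * ∑ k ∈ Finset.range N, eLpNorm (s ∘ T^[k]) q μ :=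
          mul_le_mul' le_rfl (eLpNorm_sum_le (fun k _ => aesm_iter hT hc hs k) hq)
      _ ≤ (‖(N : ℝ)⁻¹‖₊ : ℝ≥0∞) * ∑ _k ∈ Finset.range N, eLpNorm s q μ := by
          refine mul_le_mul' le_rfl (Finset.sum_le_sum fun k _ => ?_)
          exact eLpNorm_iter_comp_le hT hc q hs k
      _ = eLpNorm s q μ := by
          rw [Finset.sum_const, Finset.card_range, nsmul_eq_mul]
          have h1 : (‖(N : ℝ)⁻¹‖₊ : ℝ≥0∞) = ((N : ℝ≥0∞))⁻¹ := by
            rw [nnnorm_inv]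
            rw [ENNReal.coe_inv (by exact_mod_cast h.ne')]
            norm_num
          rw [h1, ← mul_assoc, ENNReal.inv_mul_cancel (by exact_mod_cast h.ne')
            (ENNReal.natCast_ne_top N), one_mul]

theorem koop_pow_coeFn (hT : Measurable T) (hc : ∀ A, MeasurableSet A → μ (T ⁻¹' A) ≤ μ A)
    (q : ℝ≥0∞) [Fact (1 ≤ q)] {s : X → ℝ} (hs : MemLp s q μ) (k : ℕ) :
    ↑↑((koop q hT hc ^ k) (hs.toLp s)) =ᵐ[μ] s ∘ T^[k] := by
  induction k with
  | zero =>
    simp only [pow_zero, ContinuousLinearMap.one_apply, Function.iterate_zero,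
      Function.comp_id]
    exact hs.coeFn_toLp
  | succ k ih =>
    rw [pow_succ', ContinuousLinearMap.mul_apply]
    refine (koop_coeFn q hT hc _).trans ?_
    have := (koop_qmp hT hc).ae_eq_comp ih
    refine this.trans ?_
    rw [Function.iterate_succ, Function.comp_assoc]

theorem koop_sum_coeFn (hT : Measurable T) (hc : ∀ A, MeasurableSet A → μ (T ⁻¹' A) ≤ μ A)
    (q : ℝ≥0∞) [Fact (1 ≤ q)] {s : X → ℝ} (hs : MemLp s q μ) (N : ℕ) :
    ↑↑(∑ k ∈ Finset.range N, (koop q hT hc ^ k) (hs.toLp s))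
      =ᵐ[μ] fun x => ∑ k ∈ Finset.range N, s (T^[k] x) := by
  induction N with
  | zero => simp only [Finset.range_zero, Finset.sum_empty]; exact Lp.coeFn_zero _ _ _
  | succ N ih =>
    rw [Finset.sum_range_succ]
    filter_upwards [Lp.coeFn_add (∑ k ∈ Finset.range N, (koop q hT hc ^ k) (hs.toLp s))
      ((koop q hT hc ^ N) (hs.toLp s)), ih, koop_pow_coeFn hT hc q hs N] with x h1 h2 h3
    rw [Finset.sum_range_succ, h1, Pi.add_apply, h2, h3]
    rfl

theorem cesaro_koop_coeFn (hT : Measurable T) (hc : ∀ A, MeasurableSet A → μ (T ⁻¹' A) ≤ μ A)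
    (q : ℝ≥0∞) [Fact (1 ≤ q)] {s : X → ℝ} (hs : MemLp s q μ) (N : ℕ) :
    ↑↑(cesaro (koop q hT hc) N (hs.toLp s))
      =ᵐ[μ] fun x => (N : ℝ)⁻¹ • ∑ k ∈ Finset.range N, s (T^[k] x) := by
  filter_upwards [Lp.coeFn_smul ((N : ℝ)⁻¹)
    (∑ k ∈ Finset.range N, (koop q hT hc ^ k) (hs.toLp s)), koop_sum_coeFn hT hc q hs N]
    with x h1 h2
  rw [cesaro, h1, Pi.smul_apply, h2]

theorem Lp_dist_eq {q : ℝ≥0∞} [Fact (1 ≤ q)] (F G : Lp ℝ q μ) {f' g' : X → ℝ}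
    (hf : ↑↑F =ᵐ[μ] f') (hg : ↑↑G =ᵐ[μ] g') :
    dist F G = (eLpNorm (f' - g') q μ).toReal := by
  rw [Lp.dist_def]
  congr 1
  apply eLpNorm_congr_ae
  filter_upwards [hf, hg] with x h1 h2
  simp [h1, h2]

theorem cesaro_cauchy_L2 (hT : Measurable T) (hc : ∀ A, MeasurableSet A → μ (T ⁻¹' A) ≤ μ A)
    {s : X → ℝ} (hs2 : MemLp s 2 μ) :
    CauchySeq (fun N => cesaro (koop 2 hT hc) N (hs2.toLp s)) := by
  have hnorm : ‖koop 2 hT hc (μ := μ)‖ ≤ 1 :=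
    ContinuousLinearMap.opNorm_le_bound _ zero_le_one fun F => by
      rw [one_mul]; exact koop_norm_apply_le 2 hT hc F
  have htd := ContinuousLinearMap.tendsto_birkhoffAverage_orthogonalProjection (𝕜 := ℝ)
    (koop 2 hT hc) hnorm (hs2.toLp s)
  have heq : ∀ N, birkhoffAverage ℝ (⇑(koop 2 hT hc)) id N (hs2.toLp s)
      = cesaro (koop 2 hT hc) N (hs2.toLp s) := by
    intro N
    simp [birkhoffAverage, birkhoffSum, cesaro, ContinuousLinearMap.coe_pow]
  exact ((htd.congr heq)).cauchySeq

end Core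

section Core2

open MeasureTheory Filter Finset
open scoped ENNReal NNReal Topology

variable {X : Type*} [MeasurableSpace X] {μ : MeasureTheory.Measure X} {T : X → X}

theorem cesaro_cauchy_simple (hT : Measurable T) (hc : ∀ A, MeasurableSet A → μ (T ⁻¹' A) ≤ μ A)
    (p : ℝ≥0∞) (hp1 : 1 < p) (hp2 : p < ⊤) [Fact (1 ≤ p)] {s : X → ℝ}
    (hs1 : MemLp s 1 μ) (hs2 : MemLp s 2 μ) (hsp : MemLp s p μ) (hstop : MemLp s ⊤ μ) :
    CauchySeq (fun N => cesaro (koop p hT hc) N (hsp.toLp s)) := by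
  set afn : ℕ → X → ℝ := fun N x => (N : ℝ)⁻¹ • ∑ k ∈ Finset.range N, s (T^[k] x) with hafn
  set C : ℝ≥0∞ := 2 * eLpNorm s 1 μ + 2 * eLpNorm s ⊤ μ with hCdef
  have hCt : C ≠ ⊤ := by
    rw [hCdef]
    exact ENNReal.add_ne_top.2 ⟨ENNReal.mul_ne_top (by norm_num) hs1.2.ne,
      ENNReal.mul_ne_top (by norm_num) hstop.2.ne⟩
  obtain ⟨a, b, ha, hb, hinterp⟩ := interp_exponents (μ := μ) hp1 hp2 C
  have hcau2 := cesaro_cauchy_L2 hT hc hs2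
  rw [Metric.cauchySeq_iff] at hcau2 ⊢
  intro ε hε
  set Kc := (C ^ a).toReal with hKc
  have hKc0 : 0 ≤ Kc := ENNReal.toReal_nonneg
  set δ := (ε / (Kc + 1)) ^ b⁻¹ with hδ
  have hεK : 0 < ε / (Kc + 1) := div_pos hε (by linarith)
  have hδ0 : 0 < δ := Real.rpow_pos_of_pos hεK _
  have hKδ : Kc * δ ^ b < ε := by
    rw [hδ, Real.rpow_inv_rpow hεK.le hb.ne']
    calc Kc * (ε / (Kc + 1)) < (Kc + 1) * (ε / (Kc + 1)) :=
          mul_lt_mul_of_pos_right (by linarith) hεK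
      _ = ε := by field_simp
  obtain ⟨K₀, hK₀⟩ := hcau2 δ hδ0
  refine ⟨K₀, fun m hm n hn => ?_⟩
  -- measurability and bounds for the difference of averages
  have hsm := hsp.1
  have haesm : ∀ N, AEStronglyMeasurable (afn N) μ := fun N => aesm_afn hT hc hsm N
  have hdm : AEStronglyMeasurable (afn m - afn n) μ := (haesm m).sub (haesm n)
  have hsub : ∀ q : ℝ≥0∞, 1 ≤ q → eLpNorm (afn m - afn n) q μ ≤ 2 * eLpNorm s q μ := by
    intro q hq
    calc eLpNorm (afn m - afn n) q μ ≤ eLpNorm (afn m) q μ + eLpNorm (afn n) q μ :=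
          eLpNorm_sub_le (haesm m) (haesm n) hq
      _ ≤ eLpNorm s q μ + eLpNorm s q μ :=
          add_le_add (afn_eLpNorm_le hT hc q hq hsm m) (afn_eLpNorm_le hT hc q hq hsm n)
      _ = 2 * eLpNorm s q μ := (two_mul _).symm
  have h1 : eLpNorm (afn m - afn n) 1 μ ≤ C := (hsub 1 le_rfl).trans le_self_add
  have hoo : eLpNorm (afn m - afn n) ⊤ μ ≤ C := (hsub ⊤ le_top).trans le_add_self
  have h2fin : eLpNorm (afn m - afn n) 2 μ ≠ ⊤ :=
    (((hsub 2 (by norm_num)).trans_lt (ENNReal.mul_lt_top (by norm_num) hs2.2)).ne)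
  have hbound := hinterp (afn m - afn n) hdm h1 hoo
  have hfin : C ^ a * eLpNorm (afn m - afn n) 2 μ ^ b ≠ ⊤ :=
    ENNReal.mul_ne_top (ENNReal.rpow_ne_top_of_nonneg ha hCt)
      (ENNReal.rpow_ne_top_of_nonneg hb.le h2fin)
  have hdp : dist (cesaro (koop p hT hc) m (hsp.toLp s)) (cesaro (koop p hT hc) n (hsp.toLp s))
      = (eLpNorm (afn m - afn n) p μ).toReal :=
    Lp_dist_eq _ _ (cesaro_koop_coeFn hT hc p hsp m) (cesaro_koop_coeFn hT hc p hsp n)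
  have hd2 : dist (cesaro (koop 2 hT hc) m (hs2.toLp s)) (cesaro (koop 2 hT hc) n (hs2.toLp s))
      = (eLpNorm (afn m - afn n) 2 μ).toReal :=
    Lp_dist_eq _ _ (cesaro_koop_coeFn hT hc 2 hs2 m) (cesaro_koop_coeFn hT hc 2 hs2 n)
  have hlt2 : (eLpNorm (afn m - afn n) 2 μ).toReal < δ := by
    rw [← hd2]; exact hK₀ m hm n hn
  calc dist (cesaro (koop p hT hc) m (hsp.toLp s)) (cesaro (koop p hT hc) n (hsp.toLp s))
      = (eLpNorm (afn m - afn n) p μ).toReal := hdp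
    _ ≤ (C ^ a * eLpNorm (afn m - afn n) 2 μ ^ b).toReal := ENNReal.toReal_mono hfin hbound
    _ = Kc * (eLpNorm (afn m - afn n) 2 μ).toReal ^ b := by
        rw [ENNReal.toReal_mul, ENNReal.toReal_rpow]
    _ ≤ Kc * δ ^ b := by
        refine mul_le_mul_of_nonneg_left ?_ hKc0
        exact Real.rpow_le_rpow ENNReal.toReal_nonneg hlt2.le hb.le
    _ < ε := hKδ

theorem koop_cesaro_cauchy (hT : Measurable T) (hc : ∀ A, MeasurableSet A → μ (T ⁻¹' A) ≤ μ A)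
    (p : ℝ≥0∞) (hp1 : 1 < p) (hp2 : p < ⊤) [Fact (1 ≤ p)] (F : Lp ℝ p μ) :
    CauchySeq fun N => cesaro (koop p hT hc) N F := by
  rw [Metric.cauchySeq_iff]
  intro ε hε
  have hdense := Lp.simpleFunc.dense (E := ℝ) (μ := μ) (p := p) hp2.ne
  obtain ⟨G, hGmem, hGd⟩ := hdense.exists_dist_lt F (show (0:ℝ) < ε/3 by linarith)
  set s := Lp.simpleFunc.toSimpleFunc (⟨G, hGmem⟩ : Lp.simpleFunc ℝ p μ) with hsdef
  have hseq : ⇑s =ᵐ[μ] ↑↑G := Lp.simpleFunc.toSimpleFunc_eq_toFun _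
  have hsp : MemLp (⇑s) p μ := (Lp.memLp G).ae_eq hseq.symm
  have hfin := (SimpleFunc.memLp_iff (f := s) (zero_lt_one.trans hp1).ne' hp2.ne).1 hsp
  have hs1 : MemLp (⇑s) 1 μ := (SimpleFunc.memLp_iff one_ne_zero ENNReal.one_ne_top).2 hfin
  have hs2 : MemLp (⇑s) 2 μ := (SimpleFunc.memLp_iff (by norm_num) ENNReal.ofNat_ne_top).2 hfin
  have hstop : MemLp (⇑s) ⊤ μ := by
    obtain ⟨Cb, hCb⟩ := s.exists_forall_norm_le
    exact memLp_top_of_bound s.stronglyMeasurable.aestronglyMeasurable Cb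
      (Filter.Eventually.of_forall hCb)
  have hG : hsp.toLp ⇑s = G := Lp.ext ((MemLp.coeFn_toLp hsp).trans hseq)
  have hcau := cesaro_cauchy_simple hT hc p hp1 hp2 hs1 hs2 hsp hstop
  rw [hG, Metric.cauchySeq_iff] at hcau
  obtain ⟨K₀, hK₀⟩ := hcau (ε/3) (by linarith)
  refine ⟨K₀, fun m hm n hn => ?_⟩
  have hc1 : ∀ N, dist (cesaro (koop p hT hc) N F) (cesaro (koop p hT hc) N G) ≤ dist F G := by
    intro N
    rw [dist_eq_norm, ← cesaro_sub, dist_eq_norm]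
    exact cesaro_norm_le (koop_norm_apply_le p hT hc) N _
  have h3 : dist (cesaro (koop p hT hc) n G) (cesaro (koop p hT hc) n F) ≤ dist F G := by
    rw [dist_comm]
    exact hc1 n
  calc dist (cesaro (koop p hT hc) m F) (cesaro (koop p hT hc) n F)
      ≤ dist (cesaro (koop p hT hc) m F) (cesaro (koop p hT hc) m G)
        + dist (cesaro (koop p hT hc) m G) (cesaro (koop p hT hc) n G)
        + dist (cesaro (koop p hT hc) n G) (cesaro (koop p hT hc) n F) := dist_triangle4 _ _ _ _
    _ < ε := by
        have hmn := hK₀ m hm n hn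
        have hm' := hc1 m
        linarith

end Core2

section Final

open MeasureTheory Filter Finset
open scoped ENNReal NNReal Topology

variable {X : Type*} [MeasurableSpace X] {μ : MeasureTheory.Measure X}

theorem Lp_coeFn_finset_sum {q : ℝ≥0∞} [Fact (1 ≤ q)] {ι : Type*} (t : Finset ι)
    (F : ι → Lp ℝ q μ) :
    ↑↑(∑ i ∈ t, F i) =ᵐ[μ] fun x => ∑ i ∈ t, ((F i : X →ₘ[μ] ℝ) : X → ℝ) x := by
  classical
  induction t using Finset.induction_on with
  | empty => simp only [Finset.sum_empty]; exact Lp.coeFn_zero ℝ q μ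
  | insert i t hnotmem ih =>
    rw [Finset.sum_insert hnotmem]
    filter_upwards [Lp.coeFn_add (F i) (∑ j ∈ t, F j), ih] with x h1 h2
    rw [h1, Pi.add_apply, h2]
    simp [Finset.sum_insert hnotmem]

theorem foldr_deltaK_coe (p : ℝ≥0∞) [Fact (1 ≤ p)] :
    ∀ (n : ℕ) (T : Fin n → X → X) (hmeas : ∀ j, Measurable (T j))
      (hcontr : ∀ (j : Fin n) (A : Set X), MeasurableSet A → μ (T j ⁻¹' A) ≤ μ A)
      (g : X → ℝ) (hg : MemLp g p μ),
    ↑↑((List.ofFn fun j => koop p (hmeas j) (hcontr j)).foldr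
        (fun Si v => Si v - v) (hg.toLp g))
      =ᵐ[μ] (List.ofFn T).foldr deltaK g := by
  intro n
  induction n with
  | zero =>
    intro T hmeas hcontr g hg
    simp only [List.ofFn_zero, List.foldr_nil]
    exact hg.coeFn_toLp
  | succ n IH =>
    intro T hmeas hcontr g hg
    rw [List.ofFn_succ (f := fun j => koop p (hmeas j) (hcontr j)), List.foldr_cons,
      List.ofFn_succ (f := T), List.foldr_cons]
    set W := (List.ofFn fun j : Fin n => koop p (hmeas j.succ) (hcontr j.succ)).foldr
      (fun Si v => Si v - v) (hg.toLp g) with hW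
    have hIH := IH (fun i => T i.succ) (fun i => hmeas i.succ) (fun i => hcontr i.succ) g hg
    filter_upwards [Lp.coeFn_sub (koop p (hmeas 0) (hcontr 0) W) W,
      koop_coeFn p (hmeas 0) (hcontr 0) W, hIH,
      (koop_qmp (hmeas 0) (hcontr 0)).ae_eq_comp hIH] with x h1 h2 h3 h4
    rw [h1, Pi.sub_apply, h2]
    simp only [Function.comp_apply] at h4
    rw [Function.comp_apply, h4, h3]
    rfl

end Final

section Main

open MeasureTheory Filter Finset
open scoped ENNReal NNReal Topology

theorem stmt_12 {X : Type*} [MeasurableSpace X] (μ : Measure X)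
    (p : ENNReal) (hp1 : 1 < p) (hp2 : p < ⊤)
    (n : ℕ) (T : Fin n → X → X)
    (hmeas : ∀ j, Measurable (T j))
    (hcomm : ∀ i j, T i ∘ T j = T j ∘ T i)
    (hcontr : ∀ (j : Fin n) (A : Set X), MeasurableSet A → μ (T j ⁻¹' A) ≤ μ A)
    (f : X → ℝ) (hf : MemLp f p μ)
    (hdiff : (List.ofFn T).foldr deltaK f =ᵐ[μ] 0) :
    ∃ g : Fin n → X → ℝ, (∀ j, MemLp (g j) p μ) ∧
      (∀ j, g j ∘ T j =ᵐ[μ] g j) ∧ f =ᵐ[μ] fun x => ∑ j, g j x := by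
  haveI : Fact (1 ≤ p) := ⟨hp1.le⟩
  set S : Fin n → (Lp ℝ p μ →L[ℝ] Lp ℝ p μ) := fun j => koop p (hmeas j) (hcontr j) with hS
  have hnorm : ∀ j (F : Lp ℝ p μ), ‖S j F‖ ≤ ‖F‖ := fun j F =>
    koop_norm_apply_le p (hmeas j) (hcontr j) F
  have hcomm' : ∀ i j (F : Lp ℝ p μ), S i (S j F) = S j (S i F) := by
    intro i j F
    apply Lp.ext
    have h1 := koop_coeFn p (hmeas i) (hcontr i) (S j F)
    have h2 := (koop_qmp (hmeas i) (hcontr i)).ae_eq_comp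
      (koop_coeFn p (hmeas j) (hcontr j) F)
    have h3 := koop_coeFn p (hmeas j) (hcontr j) (S i F)
    have h4 := (koop_qmp (hmeas j) (hcontr j)).ae_eq_comp
      (koop_coeFn p (hmeas i) (hcontr i) F)
    have e1 : (↑↑F ∘ T j) ∘ T i = ↑↑F ∘ (T j ∘ T i) := Function.comp_assoc _ _ _
    have e2 : (↑↑F ∘ T i) ∘ T j = ↑↑F ∘ (T j ∘ T i) := by
      rw [Function.comp_assoc, hcomm i j]
    refine ((h1.trans h2).trans (Filter.EventuallyEq.of_eq e1)).trans ?_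
    exact (((h3.trans h4).trans (Filter.EventuallyEq.of_eq e2))).symm
  have herg : ∀ j (F : Lp ℝ p μ), ∃ y, S j y = y ∧
      F - y ∈ closure (Set.range fun u => S j u - u) := fun j =>
    exists_fixed_decomp (hnorm j) (koop_cesaro_cauchy (hmeas j) (hcontr j) p hp1 hp2)
  have htrans := foldr_deltaK_coe p n T hmeas hcontr f hf
  have hzero : (List.ofFn S).foldr (fun Si v => Si v - v) (hf.toLp f) = 0 := by
    apply Lp.ext
    exact (htrans.trans hdiff).trans (Lp.coeFn_zero ℝ p μ).symm
  obtain ⟨G, hGfix, hGsum⟩ := decomp n S hnorm hcomm' herg (hf.toLp f) hzero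
  refine ⟨fun j => ↑↑(G j), fun j => Lp.memLp (G j), fun j => ?_, ?_⟩
  · have h1 := koop_coeFn p (hmeas j) (hcontr j) (G j)
    rw [hGfix j] at h1
    exact h1.symm
  · have h0 := hf.coeFn_toLp
    rw [hGsum] at h0
    exact h0.symm.trans (Lp_coeFn_finset_sum Finset.univ G)

end Main
end

section
/- Let X be a nonempty set, let S, T : X → X be commuting maps (S ∘ T = T ∘ S), and let f : X → ℝ. Then the following are equivalent: (i) there exist g, h : X → ℝ with f = g + h, g ∘ S = g and h ∘ T = h; (ii) Δ_S Δ_T f = 0, and whenever T^k S^n x = T^{k'} S^{n'} x for some x ∈ X and k, n, k', n' ∈ ℕ, then f(T^k x) = f(T^{k'} x); (iii) Δ_S Δ_T f = 0, and whenever T^k S^n x = T^{k'} S^{n'} x for some x ∈ X and k, n, k', n' ∈ ℕ, then f(S^n x) = f(S^{n'} x). -/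
section AuxStmt14

variable {X : Type*} (S T : X → X)

private lemma stmt14_norm (hST : ∀ x, S (T x) = T (S x)) (p q u v : ℕ) (y : X) :
    T^[p] (S^[q] (T^[u] (S^[v] y))) = T^[p + u] (S^[q + v] y) := by
  have hc : Function.Commute S T := fun x => hST x
  rw [(hc.iterate_iterate q u) (S^[v] y), ← Function.iterate_add_apply,
    ← Function.iterate_add_apply]

/-- Key identity from `Δ_S Δ_T f = 0`. -/
private lemma stmt14_A (hST : ∀ x, S (T x) = T (S x)) (f : X → ℝ)
    (hΔ : ∀ x, (f (T (S x)) - f (S x)) - (f (T x) - f x) = 0) :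
    ∀ (k m : ℕ) (x : X), f (T^[k] (S^[m] x)) = f (S^[m] x) + f (T^[k] x) - f x := by
  have hc : Function.Commute S T := fun x => hST x
  -- φ = Δ_T f is invariant under S^[m]
  have hφ : ∀ (m : ℕ) (x : X), f (T (S^[m] x)) - f (S^[m] x) = f (T x) - f x := by
    intro m
    induction m with
    | zero => intro x; rfl
    | succ n ih =>
      intro x
      rw [Function.iterate_succ_apply]
      exact (ih (S x)).trans (by have := hΔ x; linarith)
  intro k
  induction k with
  | zero => intro m x; simp
  | succ n ih =>
    intro m x
    rw [Function.iterate_succ_apply' T n (S^[m] x), Function.iterate_succ_apply' T n x]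
    have h1 := hφ m (T^[n] x)
    have h2 : T^[n] (S^[m] x) = S^[m] (T^[n] x) := ((hc.iterate_iterate m n) x).symm
    rw [h2]
    have := ih m x
    rw [h2] at this
    linarith

/-- ψ = Δ_S f is invariant under T^[k]. -/
private lemma stmt14_psi (hST : ∀ x, S (T x) = T (S x)) (f : X → ℝ)
    (hΔ : ∀ x, (f (T (S x)) - f (S x)) - (f (T x) - f x) = 0) :
    ∀ (k : ℕ) (x : X), f (S (T^[k] x)) - f (T^[k] x) = f (S x) - f x := by
  intro k
  induction k with
  | zero => intro x; rfl
  | succ n ih =>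
    intro x
    rw [Function.iterate_succ_apply' T n x]
    have h1 := hΔ (T^[n] x)
    have h2 : S (T (T^[n] x)) = T (S (T^[n] x)) := hST _
    rw [h2]
    have := ih x
    linarith

/-- The hard direction: from the cocycle conditions, build the decomposition. -/
private lemma stmt14_main (hST : ∀ x, S (T x) = T (S x)) (f : X → ℝ)
    (hΔ : ∀ x, (f (T (S x)) - f (S x)) - (f (T x) - f x) = 0)
    (hOrb : ∀ (x : X) (k m k' m' : ℕ), T^[k] (S^[m] x) = T^[k'] (S^[m'] x) →
      f (T^[k] x) = f (T^[k'] x)) :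
    ∃ g h : X → ℝ, (∀ x, g (S x) = g x) ∧ (∀ x, h (T x) = h x) ∧
      ∀ x, f x = g x + h x := by
  have hA := stmt14_A S T hST f hΔ
  have hψ := stmt14_psi S T hST f hΔ
  have hnorm := stmt14_norm S T hST
  -- the equivalence relation
  set R : X → X → Prop := fun x y => ∃ k m k' m' : ℕ, T^[k] (S^[m] x) = T^[k'] (S^[m'] y)
    with hR
  have hrefl : ∀ x, R x x := fun x => ⟨0, 0, 0, 0, rfl⟩
  have hsymm : ∀ {x y}, R x y → R y x := by
    rintro x y ⟨k, m, k', m', e⟩; exact ⟨k', m', k, m, e.symm⟩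
  have htrans : ∀ {x y z}, R x y → R y z → R x z := by
    rintro x y z ⟨k, m, k', m', e1⟩ ⟨a, b, c, d, e2⟩
    refine ⟨a + k, b + m, k' + c, m' + d, ?_⟩
    have := congrArg (fun w => T^[a] (S^[b] w)) e1
    rw [hnorm a b k m x, hnorm a b k' m' y] at this
    rw [this]
    have := congrArg (fun w => T^[k'] (S^[m'] w)) e2
    rw [hnorm k' m' a b y, hnorm k' m' c d z] at this
    rw [show a + k' = k' + a by omega, show b + m' = m' + b by omega, this]
  let s : Setoid X := ⟨R, ⟨hrefl, hsymm, htrans⟩⟩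
  let rep : X → X := fun x => (Quotient.mk s x).out
  have hrep1 : ∀ x, R x (rep x) := by
    intro x
    exact hsymm (Quotient.mk_out (s := s) x)
  have hrep2 : ∀ x y, R x y → rep x = rep y := by
    intro x y h
    show (Quotient.mk s x).out = (Quotient.mk s y).out
    rw [Quotient.sound (s := s) h]
  choose k m k' m' hw using hrep1
  -- well-definedness key lemma
  have key : ∀ (x r : X) (kk mm kk' mm' a b c d : ℕ),
      T^[kk] (S^[mm] x) = T^[kk'] (S^[mm'] r) →
      T^[a] (S^[b] x) = T^[c] (S^[d] r) →
      f (S^[mm'] r) - f r - (f (S^[mm] x) - f x)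
        = f (S^[d] r) - f r - (f (S^[b] x) - f x) := by
    intro x r kk mm kk' mm' a b c d e1 e2
    -- same-point relation at r
    have e3 : T^[a + kk'] (S^[b + mm'] r) = T^[kk + c] (S^[mm + d] r) := by
      have h1 := congrArg (fun w => T^[a] (S^[b] w)) e1
      rw [hnorm a b kk mm x, hnorm a b kk' mm' r] at h1
      have h2 := congrArg (fun w => T^[kk] (S^[mm] w)) e2
      rw [hnorm kk mm a b x, hnorm kk mm c d r] at h2
      rw [← h1, show a + kk = kk + a by omega, show b + mm = mm + b by omega, h2]
    have hIII : f (T^[a + kk'] r) = f (T^[kk + c] r) :=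
      hOrb r (a + kk') (b + mm') (kk + c) (mm + d) e3
    -- (I)
    have eI : T^[a + kk] (S^[mm] x) = T^[a + kk'] (S^[mm'] r) := by
      have := congrArg (fun w => T^[a] w) e1
      rw [← Function.iterate_add_apply, ← Function.iterate_add_apply] at this
      exact this
    have hI : f (S^[mm] x) + f (T^[a + kk] x) - f x
        = f (S^[mm'] r) + f (T^[a + kk'] r) - f r := by
      have := congrArg f eI
      rw [hA (a + kk) mm x, hA (a + kk') mm' r] at this
      exact this
    -- (II)
    have eII : T^[kk + a] (S^[b] x) = T^[kk + c] (S^[d] r) := by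
      have := congrArg (fun w => T^[kk] w) e2
      rw [← Function.iterate_add_apply, ← Function.iterate_add_apply] at this
      exact this
    have hII : f (S^[b] x) + f (T^[kk + a] x) - f x
        = f (S^[d] r) + f (T^[kk + c] r) - f r := by
      have := congrArg f eII
      rw [hA (kk + a) b x, hA (kk + c) d r] at this
      exact this
    rw [show a + kk = kk + a by omega] at hI
    linarith
  -- the function h
  set hh : X → ℝ :=
    fun x => f (S^[m' x] (rep x)) - f (rep x) - (f (S^[m x] x) - f x) with hhh
  have hhT : ∀ x, hh (T x) = hh x := by
    intro x
    have hrT : rep (T x) = rep x := hrep2 (T x) x ⟨0, 0, 1, 0, rfl⟩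
    -- witness for (T x, rep x): (k x, m x, k' x + 1, m' x)
    have ewit : T^[k x] (S^[m x] (T x)) = T^[k' x + 1] (S^[m' x] (rep x)) := by
      have h1 : S^[m x] (T x) = T (S^[m x] x) :=
        (Function.Commute.iterate_iterate (fun y => hST y) (m x) 1) x
      rw [h1, ← Function.iterate_succ_apply T (k x) (S^[m x] x),
        Function.iterate_succ_apply' T (k x) (S^[m x] x), hw x,
        ← Function.iterate_succ_apply' T (k' x) (S^[m' x] (rep x))]
    have hwT := hw (T x)
    rw [hrT] at hwT
    have := key (T x) (rep x) (k (T x)) (m (T x)) (k' (T x)) (m' (T x))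
      (k x) (m x) (k' x + 1) (m' x) hwT ewit
    have hval : f (S^[m x] (T x)) - f (T x) = f (S^[m x] x) - f x := by
      have h1 : S^[m x] (T x) = T^[1] (S^[m x] x) :=
        (Function.Commute.iterate_iterate (fun y => hST y) (m x) 1) x
      rw [h1, hA 1 (m x) x, Function.iterate_one]
      ring
    rw [hhh]
    simp only [hrT]
    rw [this, hval]
  have hhS : ∀ x, hh (S x) = hh x + (f (S x) - f x) := by
    intro x
    have hrS : rep (S x) = rep x := hrep2 (S x) x ⟨0, 0, 0, 1, rfl⟩
    have ewit : T^[k x] (S^[m x] (S x)) = T^[k' x] (S^[m' x + 1] (rep x)) := by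
      have h1 : S^[m x] (S x) = S^[m x + 1] x := by
        rw [Function.iterate_succ_apply]
      rw [h1]
      have := congrArg S (hw x)
      rw [show S (T^[k x] (S^[m x] x)) = T^[k x] (S (S^[m x] x)) from
          (Function.Commute.iterate_iterate (fun y => hST y) 1 (k x)) (S^[m x] x),
        show S (T^[k' x] (S^[m' x] (rep x))) = T^[k' x] (S (S^[m' x] (rep x))) from
          (Function.Commute.iterate_iterate (fun y => hST y) 1 (k' x)) (S^[m' x] (rep x))]
          at this
      rw [← Function.iterate_succ_apply' S (m x) x,
        ← Function.iterate_succ_apply' S (m' x) (rep x)] at this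
      exact this
    have hwS := hw (S x)
    rw [hrS] at hwS
    have hk := key (S x) (rep x) (k (S x)) (m (S x)) (k' (S x)) (m' (S x))
      (k x) (m x) (k' x) (m' x + 1) hwS ewit
    -- ψ(S^[m x] x) = ψ(S^[m' x] (rep x))
    have hpsieq : f (S (S^[m x] x)) - f (S^[m x] x)
        = f (S (S^[m' x] (rep x))) - f (S^[m' x] (rep x)) := by
      have h1 := hψ (k x) (S^[m x] x)
      have h2 := hψ (k' x) (S^[m' x] (rep x))
      rw [hw x] at h1
      rw [h1] at h2
      linarith
    rw [hhh]
    simp only [hrS]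
    rw [hk]
    have e1 : f (S^[m' x + 1] (rep x)) = f (S (S^[m' x] (rep x))) := by
      rw [Function.iterate_succ_apply' S (m' x) (rep x)]
    have e2 : f (S^[m x] (S x)) = f (S (S^[m x] x)) := by
      rw [← Function.iterate_succ_apply S (m x) x,
        Function.iterate_succ_apply' S (m x) x]
    rw [e1, e2]
    linarith
  refine ⟨fun x => f x - hh x, hh, ?_, hhT, fun x => by ring⟩
  intro x
  show f (S x) - hh (S x) = f x - hh x
  have := hhS x
  linarith

end AuxStmt14

theorem stmt_14 {X : Type*} [Nonempty X] (S T : X → X) (hcomm : S ∘ T = T ∘ S)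
    (f : X → ℝ) :
    ((∃ g h : X → ℝ, (∀ x, g (S x) = g x) ∧ (∀ x, h (T x) = h x) ∧
        ∀ x, f x = g x + h x)
      ↔ ((∀ x, (f (T (S x)) - f (S x)) - (f (T x) - f x) = 0) ∧
          ∀ (x : X) (k m k' m' : ℕ), T^[k] (S^[m] x) = T^[k'] (S^[m'] x) →
            f (T^[k] x) = f (T^[k'] x)))
    ∧
    ((∃ g h : X → ℝ, (∀ x, g (S x) = g x) ∧ (∀ x, h (T x) = h x) ∧
        ∀ x, f x = g x + h x)
      ↔ ((∀ x, (f (T (S x)) - f (S x)) - (f (T x) - f x) = 0) ∧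
          ∀ (x : X) (k m k' m' : ℕ), T^[k] (S^[m] x) = T^[k'] (S^[m'] x) →
            f (S^[m] x) = f (S^[m'] x))) := by
  have hST : ∀ x, S (T x) = T (S x) := fun x => congrFun hcomm x
  have hc : Function.Commute S T := fun x => hST x
  -- (i) ⇒ Δ condition
  have fwdΔ : (∃ g h : X → ℝ, (∀ x, g (S x) = g x) ∧ (∀ x, h (T x) = h x) ∧
      ∀ x, f x = g x + h x) →
      ∀ x, (f (T (S x)) - f (S x)) - (f (T x) - f x) = 0 := by
    rintro ⟨g, h, hg, hh, hf⟩ x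
    have h1 : g (T (S x)) = g (T x) := by
      rw [← hST x, hg (T x)]
    have h2 : h (T (S x)) = h (S x) := hh (S x)
    rw [hf (T (S x)), hf (S x), hf (T x), hf x, h1, h2, hg x, hh x]
    ring
  -- (i) ⇒ orbit condition (T version)
  have fwdOrb : (∃ g h : X → ℝ, (∀ x, g (S x) = g x) ∧ (∀ x, h (T x) = h x) ∧
      ∀ x, f x = g x + h x) →
      ∀ (x : X) (k m k' m' : ℕ), T^[k] (S^[m] x) = T^[k'] (S^[m'] x) →
        f (T^[k] x) = f (T^[k'] x) := by
    rintro ⟨g, h, hg, hh, hf⟩ x k m k' m' e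
    have hgS : ∀ (n : ℕ) (y : X), g (S^[n] y) = g y := by
      intro n
      induction n with
      | zero => intro y; rfl
      | succ p ih =>
        intro y
        rw [Function.iterate_succ_apply' S p y, hg, ih y]
    have hhT : ∀ (n : ℕ) (y : X), h (T^[n] y) = h y := by
      intro n
      induction n with
      | zero => intro y; rfl
      | succ p ih =>
        intro y
        rw [Function.iterate_succ_apply' T p y, hh, ih y]
    have h1 : g (T^[k] x) = g (T^[k'] x) := by
      have e1 : g (T^[k] (S^[m] x)) = g (T^[k] x) := by
        rw [← (hc.iterate_iterate m k) x, hgS m (T^[k] x)]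
      have e2 : g (T^[k'] (S^[m'] x)) = g (T^[k'] x) := by
        rw [← (hc.iterate_iterate m' k') x, hgS m' (T^[k'] x)]
      rw [← e1, ← e2, e]
    rw [hf (T^[k] x), hf (T^[k'] x), h1, hhT k x, hhT k' x]
  -- equivalence of the two orbit conditions under Δ
  have orbiff : (∀ x, (f (T (S x)) - f (S x)) - (f (T x) - f x) = 0) →
      ∀ (x : X) (k m k' m' : ℕ), T^[k] (S^[m] x) = T^[k'] (S^[m'] x) →
        (f (T^[k] x) = f (T^[k'] x) ↔ f (S^[m] x) = f (S^[m'] x)) := by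
    intro hΔ x k m k' m' e
    have hA := stmt14_A S T hST f hΔ
    have := congrArg f e
    rw [hA k m x, hA k' m' x] at this
    constructor <;> intro hx <;> linarith
  constructor
  · constructor
    · intro hi
      exact ⟨fwdΔ hi, fwdOrb hi⟩
    · rintro ⟨hΔ, hOrb⟩
      exact stmt14_main S T hST f hΔ hOrb
  · constructor
    · intro hi
      refine ⟨fwdΔ hi, fun x k m k' m' e => ?_⟩
      exact (orbiff (fwdΔ hi) x k m k' m' e).mp (fwdOrb hi x k m k' m' e)
    · rintro ⟨hΔ, hOrb⟩
      refine stmt14_main S T hST f hΔ (fun x k m k' m' e => ?_)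
      exact (orbiff hΔ x k m k' m' e).mpr (hOrb x k m k' m' e)
end

section
/- Let X be a nonempty set and T₁, …, Tₙ : X → X be pairwise commuting and pairwise unrelated maps, i.e. for all i ≠ j, all x ∈ X and all k, l, k', l' ∈ ℕ, the equality Tᵢ^k Tⱼ^l x = Tᵢ^{k'} Tⱼ^{l'} x implies k = k' and l = l'. Then a function f : X → ℝ satisfies Δ_{T₁}⋯Δ_{Tₙ} f = 0 if and only if there exist f₁, …, fₙ : X → ℝ with fⱼ ∘ Tⱼ = fⱼ for each j and f = f₁ + ⋯ + fₙ. -/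
namespace Stmt16
variable {X Y : Type*}


lemma deltaK_zero (T : X → X) : deltaK T (0 : X → ℝ) = 0 := by
  funext x; simp [deltaK]

lemma deltaK_add (T : X → X) (f g : X → ℝ) :
    deltaK T (f + g) = deltaK T f + deltaK T g := by
  funext x; simp [deltaK]; ring

lemma deltaK_sub (T : X → X) (f g : X → ℝ) :
    deltaK T (f - g) = deltaK T f - deltaK T g := by
  funext x; simp [deltaK]; ring

lemma deltaK_comm (P S : X → X) (h : ∀ x, P (S x) = S (P x)) (f : X → ℝ) :
    deltaK P (deltaK S f) = deltaK S (deltaK P f) := by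
  funext x; simp [deltaK, h x]; ring

lemma foldr_zero (l : List (X → X)) : List.foldr deltaK (0 : X → ℝ) l = 0 := by
  induction l with
  | nil => rfl
  | cons P t ih => simp [List.foldr_cons, ih, deltaK_zero]

lemma foldr_add (l : List (X → X)) (f g : X → ℝ) :
    List.foldr deltaK (f + g) l = List.foldr deltaK f l + List.foldr deltaK g l := by
  induction l with
  | nil => rfl
  | cons P t ih => simp [List.foldr_cons, ih, deltaK_add]

lemma foldr_sub (l : List (X → X)) (f g : X → ℝ) :
    List.foldr deltaK (f - g) l = List.foldr deltaK f l - List.foldr deltaK g l := by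
  induction l with
  | nil => rfl
  | cons P t ih => simp [List.foldr_cons, ih, deltaK_sub]

lemma foldr_sum {ι : Type*} (s : Finset ι) (g : ι → X → ℝ) (l : List (X → X)) :
    List.foldr deltaK (∑ j ∈ s, g j) l = ∑ j ∈ s, List.foldr deltaK (g j) l := by
  classical
  induction s using Finset.induction_on with
  | empty => simp [foldr_zero]
  | insert _ _ hx ih =>
      rw [Finset.sum_insert hx, Finset.sum_insert hx, foldr_add, ih]

lemma foldr_pull (S : X → X) (l : List (X → X))
    (hc : ∀ P ∈ l, ∀ x, P (S x) = S (P x)) (g : X → ℝ) :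
    deltaK S (List.foldr deltaK g l) = List.foldr deltaK (deltaK S g) l := by
  induction l with
  | nil => rfl
  | cons P t ih =>
      simp only [List.foldr_cons]
      rw [← ih (fun Q hQ => hc Q (List.mem_cons_of_mem _ hQ)),
        deltaK_comm P S (hc P (List.mem_cons_self))]

lemma foldr_eq_zero_of_mem (l : List (X → X)) (S : X → X) (hS : S ∈ l)
    (hc : ∀ P ∈ l, ∀ x, P (S x) = S (P x)) (g : X → ℝ) (hg : deltaK S g = 0) :
    List.foldr deltaK g l = 0 := by
  induction l with
  | nil => simp at hS
  | cons P t ih =>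
      rcases List.mem_cons.mp hS with rfl | h
      · show deltaK S (List.foldr deltaK g t) = 0
        rw [foldr_pull S t (fun Q hQ => hc Q (List.mem_cons_of_mem _ hQ)), hg, foldr_zero]
      · show deltaK P (List.foldr deltaK g t) = 0
        rw [ih h (fun Q hQ => hc Q (List.mem_cons_of_mem _ hQ)), deltaK_zero]



lemma comm_iterate {A B : X → X} (h : ∀ x, A (B x) = B (A x)) :
    ∀ (k : ℕ) (x : X), A^[k] (B x) = B (A^[k] x) := by
  intro k
  induction k with
  | zero => intro x; simp
  | succ k ihk =>
      intro x
      rw [Function.iterate_succ_apply', ihk, h, Function.iterate_succ_apply']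

def relO (S : Y → Y) (y z : Y) : Prop := ∃ a b : ℕ, S^[a] y = S^[b] z

lemma relO_equiv (S : Y → Y) : Equivalence (relO S) := by
  constructor
  · intro y; exact ⟨0, 0, rfl⟩
  · rintro y z ⟨a, b, h⟩; exact ⟨b, a, h.symm⟩
  · rintro x y z ⟨a, b, h1⟩ ⟨c, d, h2⟩
    refine ⟨c + a, b + d, ?_⟩
    have e1 : S^[c + a] x = S^[c] (S^[b] y) := by
      rw [Function.iterate_add_apply, h1]
    have e2 : S^[c] (S^[b] y) = S^[b] (S^[c] y) := by
      rw [← Function.iterate_add_apply, ← Function.iterate_add_apply, Nat.add_comm]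
    rw [e1, e2, h2, ← Function.iterate_add_apply]

def relSetoid (S : Y → Y) : Setoid Y := ⟨relO S, relO_equiv S⟩

lemma delta_surj (S : Y → Y) (hfree : ∀ (y : Y) (k l : ℕ), S^[k] y = S^[l] y → k = l)
    (u : Y → ℝ) : ∃ g : Y → ℝ, deltaK S g = u := by
  classical
  letI s : Setoid Y := relSetoid S
  set ρ : Y → Y := fun y => (Quotient.mk s y).out with hρ
  have hρrel : ∀ y, relO S y (ρ y) := by
    intro y
    have h1 : relO S (ρ y) y := Quotient.mk_out y
    exact (relO_equiv S).symm h1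
  have hρS : ∀ y, ρ (S y) = ρ y := by
    intro y
    have : relO S (S y) y := ⟨0, 1, by simp⟩
    have : Quotient.mk s (S y) = Quotient.mk s y := Quotient.sound this
    simp only [hρ, this]
  set G : Y → ℕ → ℝ := fun z b => ∑ j ∈ Finset.range b, u (S^[j] z) with hG
  set a : Y → ℕ := fun y => (hρrel y).choose with ha
  set b : Y → ℕ := fun y => (hρrel y).choose_spec.choose with hb
  have hab : ∀ y, S^[a y] y = S^[b y] (ρ y) := fun y => (hρrel y).choose_spec.choose_spec
  set g : Y → ℝ := fun y => G (ρ y) (b y) - ∑ j ∈ Finset.range (a y), u (S^[j] y) with hg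
  -- value independence of witnesses
  have two : ∀ (y : Y) (a₁ b₁ a₂ b₂ : ℕ), a₁ ≤ a₂ →
      S^[a₁] y = S^[b₁] (ρ y) → S^[a₂] y = S^[b₂] (ρ y) →
      G (ρ y) b₁ - ∑ j ∈ Finset.range a₁, u (S^[j] y)
        = G (ρ y) b₂ - ∑ j ∈ Finset.range a₂, u (S^[j] y) := by
    intro y a₁ b₁ a₂ b₂ hle h1 h2
    have key : a₂ + b₁ = a₁ + b₂ := by
      apply hfree (ρ y)
      calc S^[a₂ + b₁] (ρ y) = S^[a₂] (S^[b₁] (ρ y)) := Function.iterate_add_apply ..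
        _ = S^[a₂] (S^[a₁] y) := by rw [h1]
        _ = S^[a₂ + a₁] y := (Function.iterate_add_apply ..).symm
        _ = S^[a₁ + a₂] y := by rw [Nat.add_comm]
        _ = S^[a₁] (S^[a₂] y) := Function.iterate_add_apply ..
        _ = S^[a₁] (S^[b₂] (ρ y)) := by rw [h2]
        _ = S^[a₁ + b₂] (ρ y) := (Function.iterate_add_apply ..).symm
    obtain ⟨t, rfl⟩ : ∃ t, a₂ = a₁ + t := ⟨a₂ - a₁, by omega⟩
    obtain rfl : b₂ = b₁ + t := by omega
    have e1 : ∑ j ∈ Finset.range (a₁ + t), u (S^[j] y)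
        = ∑ j ∈ Finset.range a₁, u (S^[j] y) + ∑ j ∈ Finset.range t, u (S^[a₁ + j] y) :=
      Finset.sum_range_add _ _ _
    have e2 : G (ρ y) (b₁ + t) = G (ρ y) b₁ + ∑ j ∈ Finset.range t, u (S^[b₁ + j] (ρ y)) :=
      Finset.sum_range_add _ _ _
    have e3 : ∀ j, u (S^[a₁ + j] y) = u (S^[b₁ + j] (ρ y)) := by
      intro j
      congr 1
      calc S^[a₁ + j] y = S^[j + a₁] y := by rw [Nat.add_comm]
        _ = S^[j] (S^[a₁] y) := Function.iterate_add_apply ..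
        _ = S^[j] (S^[b₁] (ρ y)) := by rw [h1]
        _ = S^[j + b₁] (ρ y) := (Function.iterate_add_apply ..).symm
        _ = S^[b₁ + j] (ρ y) := by rw [Nat.add_comm]
    rw [e1, e2, Finset.sum_congr rfl (fun j _ => e3 j)]
    ring
  have hval : ∀ (y : Y) (a' b' : ℕ), S^[a'] y = S^[b'] (ρ y) →
      G (ρ y) b' - ∑ j ∈ Finset.range a', u (S^[j] y) = g y := by
    intro y a' b' h'
    rcases Nat.le_total a' (a y) with hle | hle
    · exact two y a' b' (a y) (b y) hle h' (hab y)
    · exact (two y (a y) (b y) a' b' hle (hab y) h').symm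
  refine ⟨g, ?_⟩
  funext y
  show g (S y) - g y = u y
  have hwit : S^[a y] (S y) = S^[b y + 1] (ρ (S y)) := by
    rw [hρS y]
    calc S^[a y] (S y) = S^[a y] (S^[1] y) := by simp
      _ = S^[a y + 1] y := (Function.iterate_add_apply ..).symm
      _ = S^[1 + a y] y := by rw [Nat.add_comm]
      _ = S (S^[a y] y) := by rw [Function.iterate_add_apply]; simp
      _ = S (S^[b y] (ρ y)) := by rw [hab y]
      _ = S^[1 + b y] (ρ y) := by rw [Function.iterate_add_apply]; simp
      _ = S^[b y + 1] (ρ y) := by rw [Nat.add_comm]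
  have hgSy : g (S y) = G (ρ y) (b y + 1) - ∑ j ∈ Finset.range (a y), u (S^[j] (S y)) := by
    rw [← hval (S y) (a y) (b y + 1) hwit, hρS y]
  have e4 : ∀ j, u (S^[j] (S y)) = u (S^[j + 1] y) := by
    intro j
    rw [Function.iterate_succ_apply]
  have e5 : G (ρ y) (b y + 1) = G (ρ y) (b y) + u (S^[b y] (ρ y)) := Finset.sum_range_succ _ _
  have e6 : ∑ j ∈ Finset.range (a y), (u (S^[j + 1] y) - u (S^[j] y))
      = u (S^[a y] y) - u (S^[0] y) := Finset.sum_range_sub (fun j => u (S^[j] y)) (a y)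
  have e7 : ∑ j ∈ Finset.range (a y), u (S^[j + 1] y)
      = ∑ j ∈ Finset.range (a y), u (S^[j] y) + (u (S^[a y] y) - u (S^[0] y)) := by
    have := e6
    rw [Finset.sum_sub_distrib] at this
    linarith
  rw [hgSy, Finset.sum_congr rfl (fun j _ => e4 j), e5, e7, hg]
  simp only [Function.iterate_zero_apply]
  rw [hab y]
  ring

lemma foldr_surj (l : List (Y → Y))
    (h : ∀ S ∈ l, ∀ (y : Y) (k k' : ℕ), S^[k] y = S^[k'] y → k = k')
    (u : Y → ℝ) : ∃ g : Y → ℝ, List.foldr deltaK g l = u := by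
  induction l generalizing u with
  | nil => exact ⟨u, rfl⟩
  | cons P t ih =>
      obtain ⟨v, hv⟩ := delta_surj P (h P (List.mem_cons_self)) u
      obtain ⟨g, hg⟩ := ih (fun S hS => h S (List.mem_cons_of_mem _ hS)) v
      exact ⟨g, by rw [List.foldr_cons, hg, hv]⟩

lemma foldr_compat (π : X → Y) :
    ∀ (m : ℕ) (A : Fin m → X → X) (B : Fin m → Y → Y),
      (∀ j x, π (A j x) = B j (π x)) → ∀ h : Y → ℝ,
      List.foldr deltaK (h ∘ π) (List.ofFn A) = (List.foldr deltaK h (List.ofFn B)) ∘ π := by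
  intro m
  induction m with
  | zero => intro A B hc h; simp [List.ofFn_zero]
  | succ m ih =>
      intro A B hc h
      rw [List.ofFn_succ, List.ofFn_succ, List.foldr_cons, List.foldr_cons,
        ih (fun i => A i.succ) (fun i => B i.succ) (fun i x => hc i.succ x) h]
      funext x
      simp [deltaK, Function.comp, hc 0 x]

lemma hard : ∀ (n : ℕ) (T : Fin n → X → X),
    (∀ i j, T i ∘ T j = T j ∘ T i) →
    (∀ i j, i ≠ j → ∀ (x : X) (k l k' l' : ℕ),
      (T i)^[k] ((T j)^[l] x) = (T i)^[k'] ((T j)^[l'] x) → k = k' ∧ l = l') →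
    ∀ f : X → ℝ, List.foldr deltaK f (List.ofFn T) = 0 →
    ∃ g : Fin n → X → ℝ, (∀ j, g j ∘ T j = g j) ∧ ∀ x, f x = ∑ j, g j x := by
  intro n
  induction n with
  | zero =>
      intro T _ _ f hf
      simp only [List.ofFn_zero, List.foldr_nil] at hf
      refine ⟨fun _ => 0, fun j => j.elim0, fun x => ?_⟩
      simp [hf]
  | succ n ih =>
      intro T hcomm hunrel f hf
      classical
      set T0 : X → X := T 0 with hT0
      set Tt : Fin n → X → X := fun j => T j.succ with hTt
      have hofn : List.ofFn T = T0 :: List.ofFn Tt := by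
        rw [List.ofFn_succ]
      set u : X → ℝ := List.foldr deltaK f (List.ofFn Tt) with hu
      have hinv : ∀ x, u (T0 x) = u x := by
        intro x
        rw [hofn, List.foldr_cons] at hf
        have := congrFun hf x
        simpa [deltaK, sub_eq_zero] using this
      have hinvIter : ∀ (k : ℕ) (x : X), u (T0^[k] x) = u x := by
        intro k
        induction k with
        | zero => intro x; simp
        | succ k ihk =>
            intro x
            rw [Function.iterate_succ_apply', hinv, ihk]
      letI s : Setoid X := relSetoid T0
      set π : X → Quotient s := fun x => Quotient.mk s x with hπ
      have hcomm0 : ∀ (j : Fin n) (x : X), T0 (Tt j x) = Tt j (T0 x) := by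
        intro j x
        simpa using congrFun (hcomm 0 j.succ) x
      have hresp : ∀ (j : Fin n) (x y : X), relO T0 x y → relO T0 (Tt j x) (Tt j y) := by
        rintro j x y ⟨a, b, hab⟩
        exact ⟨a, b, by rw [comm_iterate (hcomm0 j) a x, comm_iterate (hcomm0 j) b y, hab]⟩
      set Sq : Fin n → Quotient s → Quotient s :=
        fun j => Quotient.lift (fun x => π (Tt j x))
          (fun x y hxy => Quotient.sound (hresp j x y hxy)) with hSq
      have hSqmk : ∀ (j : Fin n) (x : X), Sq j (π x) = π (Tt j x) := fun j x => rfl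
      have hSqIter : ∀ (j : Fin n) (k : ℕ) (x : X), (Sq j)^[k] (π x) = π ((Tt j)^[k] x) := by
        intro j k
        induction k with
        | zero => intro x; simp
        | succ k ihk =>
            intro x
            rw [Function.iterate_succ_apply, hSqmk, ihk, Function.iterate_succ_apply]
      have hfreeS : ∀ (j : Fin n) (q : Quotient s) (k l : ℕ),
          (Sq j)^[k] q = (Sq j)^[l] q → k = l := by
        intro j q
        obtain ⟨x, rfl⟩ := Quotient.exists_rep q
        intro k l h
        rw [hSqIter, hSqIter] at h
        have hrel : relO T0 ((Tt j)^[k] x) ((Tt j)^[l] x) := Quotient.exact h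
        obtain ⟨p, q', hpq⟩ := hrel
        exact (hunrel 0 j.succ (Fin.succ_ne_zero j).symm x p k q' l hpq).2
      have hulift : ∀ x y : X, relO T0 x y → u x = u y := by
        rintro x y ⟨a, b, hab⟩
        rw [← hinvIter a x, hab, hinvIter]
      set ubar : Quotient s → ℝ := Quotient.lift u hulift with hubar
      obtain ⟨gbar, hgbar⟩ := foldr_surj (List.ofFn Sq)
        (by
          intro S hS
          obtain ⟨j, rfl⟩ := (List.mem_ofFn).mp hS
          exact hfreeS j) ubar
      have hg0 : List.foldr deltaK (gbar ∘ π) (List.ofFn Tt) = u := by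
        rw [foldr_compat π n Tt Sq (fun j x => rfl) gbar, hgbar]
        funext x
        rfl
      have hf' : List.foldr deltaK (f - gbar ∘ π) (List.ofFn Tt) = 0 := by
        rw [foldr_sub, hg0, ← hu, sub_self]
      obtain ⟨g', hg'inv, hg'sum⟩ := ih Tt (fun i j => hcomm i.succ j.succ)
        (fun i j hij => hunrel i.succ j.succ (fun h => hij (Fin.succ_injective _ h)))
        (f - gbar ∘ π) hf'
      refine ⟨Fin.cases (gbar ∘ π) g', ?_, ?_⟩
      · intro j
        refine Fin.cases ?_ (fun i => ?_) j
        · simp only [Fin.cases_zero]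
          funext x
          show gbar (π (T 0 x)) = gbar (π x)
          have hre : relO T0 (T0 x) x := ⟨0, 1, by simp⟩
          have : π (T0 x) = π x := Quotient.sound hre
          rw [show T 0 x = T0 x from rfl, this]
        · simp only [Fin.cases_succ]
          exact hg'inv i
      · intro x
        rw [Fin.sum_univ_succ]
        simp only [Fin.cases_zero, Fin.cases_succ]
        have h1 := hg'sum x
        simp only [Pi.sub_apply, Function.comp_apply] at h1
        have : f x = gbar (π x) + (f x - gbar (π x)) := by ring
        rw [this, h1]
        rfl

end Stmt16

theorem stmt_16 {X : Type*} [Nonempty X] (n : ℕ) (T : Fin n → X → X)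
    (hcomm : ∀ i j, T i ∘ T j = T j ∘ T i)
    (hunrel : ∀ i j, i ≠ j → ∀ (x : X) (k l k' l' : ℕ),
      (T i)^[k] ((T j)^[l] x) = (T i)^[k'] ((T j)^[l'] x) → k = k' ∧ l = l')
    (f : X → ℝ) :
    ((List.ofFn T).foldr deltaK f = 0 ↔
      ∃ g : Fin n → X → ℝ, (∀ j, g j ∘ T j = g j) ∧ ∀ x, f x = ∑ j, g j x) := by
  constructor
  · intro hf
    exact Stmt16.hard n T hcomm hunrel f hf
  · rintro ⟨g, hginv, hgsum⟩
    have hfe : f = ∑ j, g j := by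
      funext x
      rw [hgsum x]
      simp [Finset.sum_apply]
    rw [hfe, Stmt16.foldr_sum]
    apply Finset.sum_eq_zero
    intro j _
    apply Stmt16.foldr_eq_zero_of_mem _ (T j)
    · exact (List.mem_ofFn).mpr ⟨j, rfl⟩
    · intro P hP x
      obtain ⟨i, rfl⟩ := (List.mem_ofFn).mp hP
      simpa using congrFun (hcomm i j) x
    · funext x
      have := congrFun (hginv j) x
      simp only [Function.comp_apply] at this
      simp [deltaK, this]
end

section
/- Let α₁, …, αₙ ∈ ℝ be pairwise incommensurable, i.e. αᵢℤ ∩ αⱼℤ = {0} for all i ≠ j. Then a function f : ℝ → ℝ satisfies Δ_{α₁}⋯Δ_{αₙ} f = 0 if and only if there exist functions f₁, …, fₙ : ℝ → ℝ with fⱼ αⱼ-periodic for each j and f = f₁ + ⋯ + fₙ. -/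
/-- The difference operator `Δ_α f (x) = f (x + α) - f x`. -/
def deltaOp (α : ℝ) (f : ℝ → ℝ) : ℝ → ℝ := fun x => f (x + α) - f x

private lemma deltaOp_comm (a b : ℝ) (f : ℝ → ℝ) :
    deltaOp a (deltaOp b f) = deltaOp b (deltaOp a f) := by
  funext x
  simp only [deltaOp]
  rw [add_right_comm]
  ring

private lemma foldr_delta (a : ℝ) (l : List ℝ) (f : ℝ → ℝ) :
    deltaOp a (List.foldr deltaOp f l) = List.foldr deltaOp (deltaOp a f) l := by
  induction l generalizing f with
  | nil => rfl
  | cons b l ih =>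
      simp only [List.foldr_cons]
      rw [deltaOp_comm, ih]

private lemma foldr_zero (l : List ℝ) : List.foldr deltaOp (0 : ℝ → ℝ) l = 0 := by
  induction l with
  | nil => rfl
  | cons b l ih =>
      simp only [List.foldr_cons, ih]
      funext x
      simp [deltaOp]

private lemma foldr_kill (a : ℝ) (l : List ℝ) (g : ℝ → ℝ) (ha : a ∈ l)
    (hg : deltaOp a g = 0) : List.foldr deltaOp g l = 0 := by
  induction l with
  | nil => simp at ha
  | cons b l ih =>
      rcases List.mem_cons.1 ha with rfl | ha'
      · have : List.foldr deltaOp g (a :: l) = List.foldr deltaOp (deltaOp a g) l := by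
          simp only [List.foldr_cons]
          exact foldr_delta a l g
        rw [this, hg, foldr_zero]
      · simp only [List.foldr_cons, ih ha']
        funext x
        simp [deltaOp]

private lemma foldr_sum {n : ℕ} (l : List ℝ) (g : Fin n → ℝ → ℝ) :
    List.foldr deltaOp (fun x => ∑ j, g j x) l
      = fun x => ∑ j, List.foldr deltaOp (g j) l x := by
  induction l with
  | nil => rfl
  | cons b l ih =>
      simp only [List.foldr_cons, ih]
      funext x
      simp [deltaOp, Finset.sum_sub_distrib]

/-- Integer indexed partial sums. -/
private def zsum (d : ℤ → ℝ) (k : ℤ) : ℝ :=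
  (∑ i ∈ Finset.range k.toNat, d i) - ∑ i ∈ Finset.range (-k).toNat, d (-(i : ℤ) - 1)

private lemma zsum_succ (d : ℤ → ℝ) (k : ℤ) : zsum d (k + 1) = zsum d k + d k := by
  rcases le_or_gt 0 k with hk | hk
  · have h1 : (k + 1).toNat = k.toNat + 1 := by omega
    have h2 : (-k).toNat = 0 := by omega
    have h3 : (-(k + 1)).toNat = 0 := by omega
    have h4 : (k.toNat : ℤ) = k := by omega
    simp only [zsum]
    rw [h1, h2, h3, Finset.sum_range_succ, h4]
    simp
  · have h1 : (k + 1).toNat = 0 := by omega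
    have h2 : k.toNat = 0 := by omega
    have h3 : (-k).toNat = (-(k + 1)).toNat + 1 := by omega
    have h4 : -((-(k + 1)).toNat : ℤ) - 1 = k := by omega
    simp only [zsum]
    rw [h1, h2, h3, Finset.sum_range_succ, h4]
    simp only [Finset.sum_range_zero]
    ring

/-- Solving the cohomological equation `g(x+b) - g(x) = h(x)` with `g` a-periodic,
for `h` a-periodic, when `a, b` are incommensurable and `b ≠ 0`. -/
private lemma cohom (a b : ℝ) (hb : b ≠ 0)
    (hinc : ∀ m k : ℤ, (m : ℝ) * a = (k : ℝ) * b → (k : ℝ) * b = 0)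
    (h : ℝ → ℝ) (ha : ∀ x, h (x + a) = h x) :
    ∃ g : ℝ → ℝ, (∀ x, g (x + a) = g x) ∧ ∀ x, g (x + b) - g x = h x := by
  classical
  have hper : Function.Periodic h a := ha
  have hInt : ∀ (y : ℝ) (m : ℤ), h (y + (m : ℝ) * a) = h y := by
    intro y m
    exact (hper.int_mul m) y
  set G := AddSubgroup.closure ({a, b} : Set ℝ) with hG
  have haG : a ∈ G := AddSubgroup.subset_closure (by simp)
  have hbG : b ∈ G := AddSubgroup.subset_closure (by simp)
  let r : ℝ → ℝ := fun x => (QuotientAddGroup.mk (s := G) x).out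
  have hrmk : ∀ x, QuotientAddGroup.mk (s := G) (r x) = QuotientAddGroup.mk (s := G) x :=
    fun x => Quotient.out_eq _
  have hrG : ∀ x, x - r x ∈ G := by
    intro x
    have := (QuotientAddGroup.eq (s := G)).1 (hrmk x)
    simpa [neg_add_eq_sub] using this
  have hrshift : ∀ x, ∀ c ∈ G, r (x + c) = r x := by
    intro x c hc
    have : QuotientAddGroup.mk (s := G) (x + c) = QuotientAddGroup.mk (s := G) x := by
      rw [QuotientAddGroup.eq]
      simpa using neg_mem hc
    simp only [r, this]
  have hex : ∀ x, ∃ k m : ℤ, x = r x + (m : ℝ) * a + (k : ℝ) * b := by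
    intro x
    have := hrG x
    rw [hG, AddSubgroup.mem_closure_pair] at this
    obtain ⟨m, k, hmk⟩ := this
    refine ⟨k, m, ?_⟩
    have : (m : ℝ) * a + (k : ℝ) * b = x - r x := by
      simpa [zsmul_eq_mul] using hmk
    linarith
  -- uniqueness of k
  have huniq : ∀ x (k m k' m' : ℤ), x = r x + (m : ℝ) * a + (k : ℝ) * b →
      x = r x + (m' : ℝ) * a + (k' : ℝ) * b → k = k' := by
    intro x k m k' m' h1 h2
    have hab : ((m - m' : ℤ) : ℝ) * a = ((k' - k : ℤ) : ℝ) * b := by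
      push_cast
      linarith
    have := hinc _ _ hab
    have hkk : ((k' - k : ℤ) : ℝ) = 0 := by
      rcases mul_eq_zero.1 this with h | h
      · exact h
      · exact absurd h hb
    have : (k' - k : ℤ) = 0 := by exact_mod_cast hkk
    omega
  let K : ℝ → ℤ := fun x => (hex x).choose
  have hK : ∀ x, ∃ m : ℤ, x = r x + (m : ℝ) * a + (K x : ℝ) * b :=
    fun x => (hex x).choose_spec
  have hKa : ∀ x, K (x + a) = K x := by
    intro x
    obtain ⟨m, hm⟩ := hK x
    obtain ⟨m', hm'⟩ := hK (x + a)
    refine huniq (x + a) _ m' _ (m + 1) hm' ?_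
    rw [hrshift x a haG]
    push_cast
    linarith
  have hKb : ∀ x, K (x + b) = K x + 1 := by
    intro x
    obtain ⟨m, hm⟩ := hK x
    obtain ⟨m', hm'⟩ := hK (x + b)
    refine huniq (x + b) _ m' _ m hm' ?_
    rw [hrshift x b hbG]
    push_cast
    linarith
  refine ⟨fun x => zsum (fun i => h (r x + (i : ℝ) * b)) (K x), ?_, ?_⟩
  · intro x
    simp only [hrshift x a haG, hKa]
  · intro x
    simp only [hrshift x b hbG, hKb, zsum_succ]
    obtain ⟨m, hm⟩ := hK x
    have : h (r x + (K x : ℝ) * b) = h x := by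
      conv_rhs => rw [hm]
      rw [show r x + (m : ℝ) * a + (K x : ℝ) * b = (r x + (K x : ℝ) * b) + (m : ℝ) * a by ring]
      rw [hInt]
    rw [this]
    ring

private lemma main_aux : ∀ (n : ℕ) (α : Fin n → ℝ),
    (∀ i j, i ≠ j →
      {x : ℝ | ∃ m : ℤ, x = m * α i} ∩ {x : ℝ | ∃ k : ℤ, x = k * α j} = {0}) →
    ∀ f : ℝ → ℝ,
    ((List.ofFn α).foldr deltaOp f = 0 ↔
      ∃ g : Fin n → ℝ → ℝ, (∀ j x, g j (x + α j) = g j x) ∧ ∀ x, f x = ∑ j, g j x) := by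
  intro n
  induction n with
  | zero =>
      intro α _ f
      simp only [List.ofFn_zero, List.foldr_nil]
      constructor
      · intro hf
        exact ⟨fun i => absurd i.2 (by omega), fun j => absurd j.2 (by omega), by
          intro x
          simp [show f x = 0 from congrFun hf x]⟩
      · rintro ⟨g, _, hsum⟩
        funext x
        simpa using hsum x
  | succ n ih =>
      intro α hinc f
      have hofn : List.ofFn α = α 0 :: List.ofFn (fun i : Fin n => α i.succ) :=
        List.ofFn_succ (f := α)
      constructor
      · intro hf
        -- rewrite as tail fold of deltaOp (α 0) f
        have h0 : List.foldr deltaOp (deltaOp (α 0) f) (List.ofFn (fun i : Fin n => α i.succ))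
            = 0 := by
          rw [← foldr_delta]
          have : List.foldr deltaOp f (List.ofFn α)
              = deltaOp (α 0) (List.foldr deltaOp f (List.ofFn (fun i : Fin n => α i.succ))) := by
            rw [hofn]; rfl
          rw [this] at hf
          -- hf : deltaOp (α 0) (foldr ... ) = 0, goal : deltaOp (α 0) (foldr ...) = 0
          exact hf
        have hinc' : ∀ i j : Fin n, i ≠ j →
            {x : ℝ | ∃ m : ℤ, x = m * α i.succ} ∩ {x : ℝ | ∃ k : ℤ, x = k * α j.succ} = {0} := by
          intro i j hij
          exact hinc i.succ j.succ (by simpa using hij)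
        obtain ⟨h, hper, hsum⟩ := (ih (fun i => α i.succ) hinc' (deltaOp (α 0) f)).1 h0
        by_cases ha0 : α 0 = 0
        · refine ⟨Fin.cons f (fun _ => 0), ?_, ?_⟩
          · intro j x
            refine Fin.cases ?_ ?_ j
            · simp [ha0]
            · intro i; simp
          · intro x
            rw [Fin.sum_univ_succ]
            simp
        · -- solve cohomological equations
          have hco : ∀ j : Fin n, ∃ g : ℝ → ℝ, (∀ x, g (x + α j.succ) = g x) ∧
              ∀ x, g (x + α 0) - g x = h j x := by
            intro j
            apply cohom (α j.succ) (α 0) ha0 ?_ (h j) (hper j)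
            intro m k hmk
            have hset := hinc j.succ 0 (Fin.succ_ne_zero j)
            have hmem : (m : ℝ) * α j.succ ∈
                ({x : ℝ | ∃ m : ℤ, x = m * α j.succ} ∩ {x : ℝ | ∃ k : ℤ, x = k * α 0}) :=
              ⟨⟨m, rfl⟩, ⟨k, hmk⟩⟩
            rw [hset] at hmem
            rw [← hmk]
            simpa using hmem
          choose G hG1 hG2 using hco
          refine ⟨Fin.cons (fun x => f x - ∑ j, G j x) G, ?_, ?_⟩
          · intro j x
            refine Fin.cases ?_ ?_ j
            · simp only [Fin.cons_zero]
              have hdf : f (x + α 0) - f x = ∑ j, h j x := by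
                have := hsum x
                simpa [deltaOp] using this
              have hdG : ∀ j, G j (x + α 0) - G j x = h j x := fun j => hG2 j x
              have : ∑ j, G j (x + α 0) - ∑ j, G j x = ∑ j, h j x := by
                rw [← Finset.sum_sub_distrib]
                exact Finset.sum_congr rfl fun j _ => hdG j
              linarith
            · intro i
              simp only [Fin.cons_succ]
              exact hG1 i x
          · intro x
            rw [Fin.sum_univ_succ]
            simp only [Fin.cons_zero, Fin.cons_succ]
            ring
      · rintro ⟨g, hper, hsum⟩
        have hfeq : f = fun x => ∑ j, g j x := funext hsum
        rw [hfeq, foldr_sum]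
        funext x
        have : ∀ j : Fin (n + 1), List.foldr deltaOp (g j) (List.ofFn α) = 0 := by
          intro j
          apply foldr_kill (α j)
          · exact List.mem_ofFn.2 ⟨j, rfl⟩
          · funext y
            simp [deltaOp, hper j y]
        simp only [this]
        simp

theorem stmt_17 (n : ℕ) (α : Fin n → ℝ)
    (hinc : ∀ i j, i ≠ j →
      {x : ℝ | ∃ m : ℤ, x = m * α i} ∩ {x : ℝ | ∃ k : ℤ, x = k * α j} = {0})
    (f : ℝ → ℝ) :
    ((List.ofFn α).foldr deltaOp f = 0 ↔
      ∃ g : Fin n → ℝ → ℝ, (∀ j x, g j (x + α j) = g j x) ∧ ∀ x, f x = ∑ j, g j x) :=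
  main_aux n α hinc f
end

section
/- Let α₁, …, αₙ ∈ ℝ be nonzero and pairwise incommensurable, i.e. αᵢℤ ∩ αⱼℤ = {0} for all i ≠ j. Suppose f₁, …, fₙ and g₁, …, gₙ are essentially bounded Lebesgue-measurable functions on ℝ such that for each j, fⱼ(x + αⱼ) = fⱼ(x) and gⱼ(x + αⱼ) = gⱼ(x) for almost every x ∈ ℝ, and f₁ + ⋯ + fₙ = g₁ + ⋯ + gₙ almost everywhere. Then for each j there is a constant cⱼ ∈ ℝ with fⱼ − gⱼ = cⱼ almost everywhere; that is, a periodic decomposition in L^∞(ℝ) with incommensurable periods is unique up to additive constants. -/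
open MeasureTheory Set

namespace Stmt19Aux

local notation "vol" => (volume : Measure ℝ)

lemma ae_shift (b : ℝ) {p : ℝ → Prop} (h : ∀ᵐ x ∂vol, p x) :
    ∀ᵐ x ∂vol, p (x + b) := by
  rw [ae_iff] at h ⊢
  have hs : {x : ℝ | ¬ p (x + b)} = (· + b) ⁻¹' {x | ¬ p x} := rfl
  rw [hs]
  exact (measurePreserving_add_right vol b).quasiMeasurePreserving.preimage_null h

/-- difference operator -/
def dd (b : ℝ) (u : ℝ → ℝ) : ℝ → ℝ := fun x => u (x + b) - u x

def ddL : List ℝ → (ℝ → ℝ) → ℝ → ℝ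
  | [], u => u
  | b :: l, u => ddL l (dd b u)

lemma dd_comm (b e : ℝ) (u : ℝ → ℝ) : dd b (dd e u) = dd e (dd b u) := by
  funext x
  simp only [dd]
  rw [add_right_comm]
  ring

lemma dd_ae_zero {b : ℝ} {u : ℝ → ℝ} (h : ∀ᵐ x ∂vol, u x = 0) :
    ∀ᵐ x ∂vol, dd b u x = 0 := by
  filter_upwards [h, ae_shift b h] with x h1 h2
  simp [dd, h1, h2]

lemma ddL_ae_zero {l : List ℝ} {u : ℝ → ℝ} (h : ∀ᵐ x ∂vol, u x = 0) :
    ∀ᵐ x ∂vol, ddL l u x = 0 := by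
  induction l generalizing u with
  | nil => exact h
  | cons b l ih => exact ih (dd_ae_zero h)

lemma ddL_kill {l : List ℝ} {b : ℝ} {u : ℝ → ℝ} (hb : b ∈ l)
    (h : ∀ᵐ x ∂vol, dd b u x = 0) : ∀ᵐ x ∂vol, ddL l u x = 0 := by
  induction l generalizing u with
  | nil => simp at hb
  | cons c l ih =>
    rcases List.mem_cons.1 hb with rfl | hb'
    · show ∀ᵐ x ∂vol, ddL l (dd b u) x = 0
      exact ddL_ae_zero h
    · refine ih hb' ?_
      have : dd b (dd c u) = dd c (dd b u) := dd_comm b c u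
      rw [this]
      exact dd_ae_zero h

lemma ddL_sum {ι : Type*} (l : List ℝ) (s : Finset ι) (w : ι → ℝ → ℝ) :
    ddL l (fun x => ∑ i ∈ s, w i x) = fun x => ∑ i ∈ s, ddL l (w i) x := by
  induction l generalizing w with
  | nil => rfl
  | cons b l ih =>
    show ddL l (dd b fun x => ∑ i ∈ s, w i x) = _
    have : (dd b fun x => ∑ i ∈ s, w i x) = fun x => ∑ i ∈ s, dd b (w i) x := by
      funext x
      simp [dd, Finset.sum_sub_distrib]
    rw [this, ih]
    rfl

/-- The constant in a coboundary-type relation for a bounded function vanishes. -/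
lemma c_eq_zero {u : ℝ → ℝ} {b c : ℝ} (hbdd : ∃ C, ∀ᵐ x ∂vol, |u x| ≤ C)
    (hc : ∀ᵐ x ∂vol, u (x + b) - u x = c) : c = 0 := by
  obtain ⟨C, hC⟩ := hbdd
  have key : ∀ N : ℕ, ∀ᵐ x ∂vol, u (x + N * b) = u x + N * c := by
    intro N
    induction N with
    | zero => simp
    | succ N ih =>
      filter_upwards [ih, ae_shift ((N : ℝ) * b) hc] with x h1 h2
      have hx : x + ((N : ℕ) + 1 : ℕ) * b = x + (N : ℝ) * b + b := by push_cast; ring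
      push_cast
      rw [show x + ((N : ℝ) + 1) * b = x + (N : ℝ) * b + b by ring]
      rw [sub_eq_iff_eq_add] at h2
      rw [h2, h1]
      ring
  by_contra hne
  obtain ⟨N, hN⟩ := exists_nat_gt (2 * C / |c|)
  have hc0 : 0 < |c| := abs_pos.2 hne
  have h2C : 2 * C < N * |c| := by
    rw [div_lt_iff₀ hc0] at hN
    linarith
  obtain ⟨x, hx1, hx2, hx3⟩ :=
    ((key N).and (hC.and (ae_shift ((N : ℝ) * b) hC))).exists
  have : |(N : ℝ) * c| ≤ 2 * C := by
    have : (N : ℝ) * c = u (x + N * b) - u x := by rw [hx1]; ring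
    rw [this]
    calc |u (x + ↑N * b) - u x| ≤ |u (x + ↑N * b)| + |u x| := abs_sub _ _
      _ ≤ 2 * C := by linarith [hx2, hx3]
  rw [abs_mul, Nat.abs_cast] at this
  linarith

lemma dense_zsmul {a b : ℝ} [hfa : Fact (0 < a)] (hb : b ≠ 0)
    (hinc : ∀ m k : ℤ, (m : ℝ) * a = (k : ℝ) * b → (m : ℝ) * a = 0) :
    DenseRange (fun n : ℤ => n • (b : AddCircle a)) := by
  have hapos : 0 < a := hfa.out
  have hS : Dense ((AddSubgroup.zmultiples a ⊔ AddSubgroup.zmultiples b : AddSubgroup ℝ) :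
      Set ℝ) := by
    rcases (AddSubgroup.zmultiples a ⊔ AddSubgroup.zmultiples b).dense_or_cyclic with h | ⟨g, hg⟩
    · exact h
    · exfalso
      have haS : a ∈ AddSubgroup.closure ({g} : Set ℝ) := by
        rw [← hg]; exact AddSubgroup.mem_sup_left (AddSubgroup.mem_zmultiples a)
      have hbS : b ∈ AddSubgroup.closure ({g} : Set ℝ) := by
        rw [← hg]; exact AddSubgroup.mem_sup_right (AddSubgroup.mem_zmultiples b)
      obtain ⟨m, hma⟩ := AddSubgroup.mem_closure_singleton.1 haS
      obtain ⟨k, hkb⟩ := AddSubgroup.mem_closure_singleton.1 hbS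
      have hk0 : (k : ℤ) ≠ 0 := by
        rintro rfl; apply hb; rw [← hkb]; simp
      have hkey : (k : ℝ) * a = (m : ℝ) * b := by
        rw [← hma, ← hkb]
        simp only [zsmul_eq_mul]
        ring
      have h0 := hinc k m hkey
      have hkR : (k : ℝ) ≠ 0 := Int.cast_ne_zero.2 hk0
      exact hapos.ne' ((mul_eq_zero.1 h0).resolve_left hkR)
  have hmk_cont : Continuous ((↑) : ℝ → AddCircle a) := continuous_quotient_mk'
  have hmk_surj : Function.Surjective ((↑) : ℝ → AddCircle a) := Quotient.exists_rep
  have himg : Dense (((↑) : ℝ → AddCircle a) ''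
      ((AddSubgroup.zmultiples a ⊔ AddSubgroup.zmultiples b : AddSubgroup ℝ) : Set ℝ)) :=
    (hmk_surj.denseRange).dense_image hmk_cont hS
  refine Dense.mono ?_ himg
  rintro y ⟨x, hx, rfl⟩
  obtain ⟨s, hs, t, ht, rfl⟩ := AddSubgroup.mem_sup.1 hx
  obtain ⟨p, rfl⟩ := AddSubgroup.mem_zmultiples_iff.1 hs
  obtain ⟨q, rfl⟩ := AddSubgroup.mem_zmultiples_iff.1 ht
  have key : ((p • a + q • b : ℝ) : AddCircle a) = q • (b : AddCircle a) := by
    rw [AddCircle.coe_add, AddCircle.coe_zsmul, AddCircle.coe_zsmul,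
      AddCircle.coe_period, smul_zero, zero_add]
  exact ⟨q, key.symm⟩

lemma constant_of_two_periods_pos {u : ℝ → ℝ} (hm : Measurable u) {a b : ℝ}
    (hapos : 0 < a) (hb : b ≠ 0)
    (hinc : ∀ m k : ℤ, (m : ℝ) * a = (k : ℝ) * b → (m : ℝ) * a = 0)
    (hua : ∀ᵐ x ∂vol, u (x + a) = u x) (hub : ∀ᵐ x ∂vol, u (x + b) = u x) :
    ∃ c, ∀ᵐ x ∂vol, u x = c := by
  haveI : Fact (0 < a) := ⟨hapos⟩
  have hZ : ∀ n : ℤ, ∀ᵐ x ∂vol, u (x + n * a) = u x := by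
    intro n
    induction n using Int.induction_on with
    | zero => simp
    | succ n ih =>
      filter_upwards [ih, ae_shift ((n : ℝ) * a) hua] with x h1 h2
      have e : x + ((n : ℤ) + 1 : ℤ) * a = x + (n : ℝ) * a + a := by push_cast; ring
      rw [e, h2]
      simpa using h1
    | pred n ih =>
      filter_upwards [ih, ae_shift ((-(n : ℝ) - 1) * a) hua] with x h1 h2
      have e1 : x + ((-(n : ℤ) - 1 : ℤ) : ℝ) * a = x + (-(n : ℝ) - 1) * a := by push_cast; ring
      have e2 : x + (-(n : ℝ) - 1) * a + a = x + ((-(n : ℤ) : ℤ) : ℝ) * a := by push_cast; ring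
      rw [e1, ← h2, e2]
      simpa using h1
  set E := {x : ℝ | ∀ n : ℤ, u (x + n * a) = u x} with hE
  have hEmeas : MeasurableSet E := by
    have : E = ⋂ n : ℤ, {x | u (x + (n : ℝ) * a) = u x} := by ext x; simp [hE]
    rw [this]
    exact MeasurableSet.iInter fun n =>
      measurableSet_eq_fun (hm.comp (measurable_add_const _)) hm
  have hEae : ∀ᵐ x ∂vol, x ∈ E := ae_all_iff.2 hZ
  have hEshift : ∀ x : ℝ, x + a ∈ E ↔ x ∈ E := by
    intro x
    constructor
    · intro hx
      have h1 : ∀ n : ℤ, u (x + n * a) = u (x + a) := by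
        intro n
        have h2 := hx (n - 1)
        rwa [show x + a + ((n - 1 : ℤ) : ℝ) * a = x + (n : ℝ) * a by push_cast; ring] at h2
      intro n
      rw [h1 n]
      simpa using (h1 0).symm
    · intro hx n
      have e : x + a + (n : ℝ) * a = x + ((n + 1 : ℤ) : ℝ) * a := by push_cast; ring
      rw [e, hx (n + 1)]
      have h1' : u (x + a) = u x := by simpa using hx 1
      exact h1'.symm
  set v := E.indicator u with hv
  have hvm : Measurable v := hm.indicator hEmeas
  have hvu : v =ᵐ[vol] u := by
    filter_upwards [hEae] with x hx
    simp [hv, indicator_of_mem hx]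
  have hper : Function.Periodic v a := by
    intro x
    by_cases hx : x ∈ E
    · rw [hv, indicator_of_mem ((hEshift x).2 hx), indicator_of_mem hx]
      simpa using hx 1
    · rw [hv, indicator_of_notMem (fun h => hx ((hEshift x).1 h)), indicator_of_notMem hx]
  have hvZ : ∀ (x : ℝ) (n : ℤ), v (x + n * a) = v x := by
    intro x n
    have h := hper.sub_int_mul_eq (x := x + n * a) n
    simpa using h.symm
  let F : AddCircle a → ℝ :=
    fun y => v ((AddCircle.measurableEquivIoc a 0 y : Ioc (0 : ℝ) (0 + a)) : ℝ)
  have hFm : Measurable F :=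
    hvm.comp (measurable_subtype_coe.comp (AddCircle.measurableEquivIoc a 0).measurable)
  have hFmk : ∀ x : ℝ, F (x : AddCircle a) = v x := by
    intro x
    have hmk : ((((AddCircle.measurableEquivIoc a 0 (x : AddCircle a) :
        Ioc (0 : ℝ) (0 + a)) : ℝ)) : AddCircle a) = (x : AddCircle a) :=
      (AddCircle.equivIoc a 0).symm_apply_apply (x : AddCircle a)
    rw [QuotientAddGroup.eq] at hmk
    obtain ⟨n, hn⟩ := hmk
    show v _ = v x
    have : ((AddCircle.measurableEquivIoc a 0 (x : AddCircle a) : Ioc (0 : ℝ) (0 + a)) : ℝ)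
        = x + (-n : ℤ) * a := by
      have := hn
      simp only [zsmul_eq_mul] at this
      push_cast
      linarith
    rw [this, hvZ]
  have hvb : ∀ᵐ x ∂vol, v (x + b) = v x := by
    filter_upwards [hub, hvu, ae_shift b hvu] with x h1 h2 h3
    rw [h3, h1, h2]
  have hrot : ∀ᵐ y ∂(volume : Measure (AddCircle a)), F ((b : AddCircle a) + y) = F y := by
    have hAmeas : MeasurableSet {y : AddCircle a | ¬ F ((b : AddCircle a) + y) = F y} :=
      (measurableSet_eq_fun (hFm.comp (measurable_const_add _)) hFm).compl
    have hpre : ((QuotientAddGroup.mk ⁻¹'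
        {y : AddCircle a | ¬ F ((b : AddCircle a) + y) = F y}) : Set ℝ)
        = {x : ℝ | ¬ v (x + b) = v x} := by
      ext x
      simp only [mem_preimage, mem_setOf_eq]
      have e : (b : AddCircle a) + (x : AddCircle a) = ((x + b : ℝ) : AddCircle a) := by
        rw [← QuotientAddGroup.mk_add, add_comm]
      rw [e, hFmk, hFmk]
    rw [ae_iff]
    have hkey : (volume : Measure (AddCircle a))
        {y : AddCircle a | ¬ F ((b : AddCircle a) + y) = F y} = 0 := by
      have h1 := (AddCircle.measurePreserving_mk a 0).measure_preimage
        hAmeas.nullMeasurableSet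
      have h2 : vol {x : ℝ | ¬ v (x + b) = v x} = 0 := hvb
      rw [← h1]
      refine le_antisymm ?_ (by positivity)
      calc ((volume : Measure ℝ).restrict (Ioc 0 (0 + a))) (QuotientAddGroup.mk ⁻¹'
            {y : AddCircle a | ¬ F ((b : AddCircle a) + y) = F y})
          ≤ vol (QuotientAddGroup.mk ⁻¹'
            {y : AddCircle a | ¬ F ((b : AddCircle a) + y) = F y}) :=
            Measure.restrict_apply_le _ _
        _ = 0 := by rw [hpre]; exact h2
    exact hkey
  have hdense : DenseRange (fun n : ℤ => n • (b : AddCircle a)) :=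
    dense_zsmul hb hinc
  have herg : Ergodic (fun y => (b : AddCircle a) + y) (volume : Measure (AddCircle a)) :=
    ergodic_add_left_of_denseRange_zsmul hdense volume
  obtain ⟨c, hc⟩ := herg.ae_eq_const_of_ae_eq_comp₀ hFm.nullMeasurable hrot
  refine ⟨c, ?_⟩
  have hNmeas : MeasurableSet {y : AddCircle a | ¬ F y = c} :=
    (measurableSet_eq_fun hFm measurable_const).compl
  have hN0 : (volume : Measure (AddCircle a)) {y : AddCircle a | ¬ F y = c} = 0 := by
    rw [← ae_iff]
    exact hc
  have hcover : ∀ x : ℝ, ∃ k : ℤ, x ∈ Ioc ((k : ℝ) * a) ((k : ℝ) * a + a) := by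
    intro x
    refine ⟨⌈x / a⌉ - 1, ?_, ?_⟩
    · push_cast
      rw [← lt_div_iff₀ hapos]
      have h1 : (⌈x / a⌉ : ℝ) < x / a + 1 := Int.ceil_lt_add_one _
      linarith
    · push_cast
      rw [show ((⌈x / a⌉ : ℝ) - 1) * a + a = (⌈x / a⌉ : ℝ) * a by ring, ← div_le_iff₀ hapos]
      exact Int.le_ceil _
  have hpre0 : vol ((QuotientAddGroup.mk ⁻¹' {y : AddCircle a | ¬ F y = c}) : Set ℝ) = 0 := by
    have hsub : ((QuotientAddGroup.mk ⁻¹' {y : AddCircle a | ¬ F y = c}) : Set ℝ) ⊆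
        ⋃ k : ℤ, ((QuotientAddGroup.mk ⁻¹' {y : AddCircle a | ¬ F y = c}) ∩
          Ioc ((k : ℝ) * a) ((k : ℝ) * a + a)) := by
      intro x hx
      obtain ⟨k, hk⟩ := hcover x
      exact mem_iUnion.2 ⟨k, hx, hk⟩
    refine measure_mono_null hsub (measure_iUnion_null fun k => ?_)
    have hmeaspre : MeasurableSet ((QuotientAddGroup.mk ⁻¹'
        {y : AddCircle a | ¬ F y = c}) : Set ℝ) := AddCircle.measurable_mk' hNmeas
    rw [← Measure.restrict_apply hmeaspre]
    have h1 := (AddCircle.measurePreserving_mk a ((k : ℝ) * a)).measure_preimage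
      hNmeas.nullMeasurableSet
    rw [h1]
    exact hN0
  have hFc : ∀ᵐ x ∂vol, F ((x : ℝ) : AddCircle a) = c := by
    rw [ae_iff]
    exact hpre0
  filter_upwards [hFc, hvu] with x h1 h2
  rw [← h2, ← hFmk x, h1]

lemma constant_of_two_periods {u : ℝ → ℝ} (hm : Measurable u) {a b : ℝ}
    (ha : a ≠ 0) (hb : b ≠ 0)
    (hinc : ∀ m k : ℤ, (m : ℝ) * a = (k : ℝ) * b → (m : ℝ) * a = 0)
    (hua : ∀ᵐ x ∂vol, u (x + a) = u x) (hub : ∀ᵐ x ∂vol, u (x + b) = u x) :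
    ∃ c, ∀ᵐ x ∂vol, u x = c := by
  rcases ha.lt_or_gt with h | h
  · have hua' : ∀ᵐ x ∂vol, u (x + -a) = u x := by
      filter_upwards [ae_shift (-a) hua] with x hx
      rw [show x + -a + a = x by ring] at hx
      exact hx.symm
    refine constant_of_two_periods_pos hm (a := -a) (by linarith) hb ?_ hua' hub
    intro m k hmk
    have h1 : ((-m : ℤ) : ℝ) * a = (k : ℝ) * b := by push_cast at hmk ⊢; linarith
    have h2 := hinc (-m) k h1
    push_cast at h2 ⊢
    linarith
  · exact constant_of_two_periods_pos hm h hb hinc hua hub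

lemma main_list {a : ℝ} (ha : a ≠ 0) :
    ∀ (l : List ℝ) (u : ℝ → ℝ), Measurable u → (∃ C, ∀ᵐ x ∂vol, |u x| ≤ C) →
    (∀ᵐ x ∂vol, u (x + a) = u x) →
    (∀ b ∈ l, b ≠ 0 ∧ ∀ m k : ℤ, (m : ℝ) * a = (k : ℝ) * b → (m : ℝ) * a = 0) →
    (∀ᵐ x ∂vol, ddL l u x = 0) → ∃ c, ∀ᵐ x ∂vol, u x = c := by
  intro l
  induction l with
  | nil => exact fun u _ _ _ _ h0 => ⟨0, h0⟩
  | cons b l ih =>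
    rintro u hm ⟨C, hC⟩ hua hl h0
    have hvm : Measurable (dd b u) := (hm.comp (measurable_add_const b)).sub hm
    have hvb : ∃ C', ∀ᵐ x ∂vol, |dd b u x| ≤ C' := by
      refine ⟨2 * C, ?_⟩
      filter_upwards [hC, ae_shift b hC] with x h1 h2
      calc |u (x + b) - u x| ≤ |u (x + b)| + |u x| := abs_sub _ _
        _ ≤ 2 * C := by linarith
    have hva : ∀ᵐ x ∂vol, dd b u (x + a) = dd b u x := by
      filter_upwards [hua, ae_shift b hua] with x h1 h2
      show u (x + a + b) - u (x + a) = u (x + b) - u x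
      rw [h1, show x + a + b = x + b + a by ring, h2]
    have h0' : ∀ᵐ x ∂vol, ddL l (dd b u) x = 0 := h0
    obtain ⟨c0, hc0⟩ := ih (dd b u) hvm hvb hva
      (fun e he => hl e (List.mem_cons_of_mem _ he)) h0'
    have hc0' : ∀ᵐ x ∂vol, u (x + b) - u x = c0 := hc0
    have hz : c0 = 0 := c_eq_zero ⟨C, hC⟩ hc0'
    have hub : ∀ᵐ x ∂vol, u (x + b) = u x := by
      filter_upwards [hc0'] with x hx
      rw [hz] at hx
      linarith
    obtain ⟨hbne, hbinc⟩ := hl b List.mem_cons_self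
    exact constant_of_two_periods hm ha hbne hbinc hua hub

end Stmt19Aux

open Stmt19Aux in
theorem stmt_19 (n : ℕ) (α : Fin n → ℝ) (hα : ∀ j, α j ≠ 0)
    (hinc : ∀ i j, i ≠ j →
      {x : ℝ | ∃ m : ℤ, x = m * α i} ∩ {x : ℝ | ∃ k : ℤ, x = k * α j} = {0})
    (f g : Fin n → ℝ → ℝ)
    (hfmeas : ∀ j, Measurable (f j)) (hgmeas : ∀ j, Measurable (g j))
    (hfbdd : ∀ j, ∃ C : ℝ, ∀ᵐ x ∂(volume : Measure ℝ), |f j x| ≤ C)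
    (hgbdd : ∀ j, ∃ C : ℝ, ∀ᵐ x ∂(volume : Measure ℝ), |g j x| ≤ C)
    (hfper : ∀ j, ∀ᵐ x ∂(volume : Measure ℝ), f j (x + α j) = f j x)
    (hgper : ∀ j, ∀ᵐ x ∂(volume : Measure ℝ), g j (x + α j) = g j x)
    (heq : ∀ᵐ x ∂(volume : Measure ℝ), ∑ j, f j x = ∑ j, g j x) :
    ∀ j, ∃ c : ℝ, ∀ᵐ x ∂(volume : Measure ℝ), f j x - g j x = c := by
  intro j
  set h : Fin n → ℝ → ℝ := fun i x => f i x - g i x with hh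
  have hmeas : ∀ i, Measurable (h i) := fun i => (hfmeas i).sub (hgmeas i)
  have hbdd : ∀ i, ∃ C, ∀ᵐ x ∂(volume : Measure ℝ), |h i x| ≤ C := by
    intro i
    obtain ⟨C1, hC1⟩ := hfbdd i
    obtain ⟨C2, hC2⟩ := hgbdd i
    refine ⟨C1 + C2, ?_⟩
    filter_upwards [hC1, hC2] with x h1 h2
    calc |f i x - g i x| ≤ |f i x| + |g i x| := abs_sub _ _
      _ ≤ C1 + C2 := add_le_add h1 h2
  have hper : ∀ i, ∀ᵐ x ∂(volume : Measure ℝ), h i (x + α i) = h i x := by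
    intro i
    filter_upwards [hfper i, hgper i] with x h1 h2
    simp only [hh, h1, h2]
  have hsum : ∀ᵐ x ∂(volume : Measure ℝ), ∑ i, h i x = 0 := by
    filter_upwards [heq] with x hx
    simp [hh, Finset.sum_sub_distrib, hx]
  have hincm : ∀ i k, i ≠ k → ∀ m p : ℤ, (m : ℝ) * α i = (p : ℝ) * α k →
      (m : ℝ) * α i = 0 := by
    intro i k hik m p hmp
    have hx : ((m : ℝ) * α i) ∈ ({x : ℝ | ∃ m' : ℤ, x = m' * α i} ∩
        {x : ℝ | ∃ k' : ℤ, x = k' * α k}) := ⟨⟨m, rfl⟩, ⟨p, hmp⟩⟩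
    rw [hinc i k hik] at hx
    exact hx
  set l : List ℝ := (Finset.univ.erase j).toList.map α with hl
  have hmem : ∀ i, i ≠ j → α i ∈ l := by
    intro i hij
    rw [hl]
    exact List.mem_map.2 ⟨i, Finset.mem_toList.2
      (Finset.mem_erase.2 ⟨hij, Finset.mem_univ i⟩), rfl⟩
  have hlprop : ∀ b ∈ l, b ≠ 0 ∧ ∀ m k : ℤ, (m : ℝ) * α j = (k : ℝ) * b →
      (m : ℝ) * α j = 0 := by
    intro b hb
    rw [hl] at hb
    obtain ⟨i, hi, rfl⟩ := List.mem_map.1 hb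
    have hij : i ≠ j := (Finset.mem_erase.1 (Finset.mem_toList.1 hi)).1
    exact ⟨hα i, hincm j i (Ne.symm hij)⟩
  have h1 : ∀ᵐ x ∂(volume : Measure ℝ), ddL l (fun x => ∑ i, h i x) x = 0 :=
    ddL_ae_zero hsum
  have h2 : ∀ᵐ x ∂(volume : Measure ℝ), ∑ i, ddL l (h i) x = 0 := by
    have e := ddL_sum l Finset.univ h
    filter_upwards [h1] with x hx
    rw [e] at hx
    exact hx
  have h3 : ∀ i, i ≠ j → ∀ᵐ x ∂(volume : Measure ℝ), ddL l (h i) x = 0 := by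
    intro i hij
    refine ddL_kill (hmem i hij) ?_
    filter_upwards [hper i] with x hx
    show h i (x + α i) - h i x = 0
    rw [hx, sub_self]
  have h4 : ∀ᵐ x ∂(volume : Measure ℝ), ddL l (h j) x = 0 := by
    have hall : ∀ᵐ x ∂(volume : Measure ℝ), ∀ i : Fin n, i ≠ j → ddL l (h i) x = 0 := by
      refine ae_all_iff.2 fun i => ?_
      by_cases hij : i = j
      · filter_upwards with x hij'
        exact absurd hij hij'
      · filter_upwards [h3 i hij] with x hx _
        exact hx
    filter_upwards [h2, hall] with x hx2 hxall
    have e : ∑ i, ddL l (h i) x = ddL l (h j) x :=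
      Finset.sum_eq_single j (fun i _ hij => hxall i hij)
        (fun hj => absurd (Finset.mem_univ j) hj)
    rw [← e]
    exact hx2
  obtain ⟨c, hc⟩ := main_list (hα j) l (h j) (hmeas j) (hbdd j) (hper j) hlprop h4
  exact ⟨c, hc⟩
end
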